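/- arXiv:1303.4575 — 3 statements merged into one kernel-verified Lean document; each statement's English description precedes it below -/
import Mathlib

section
/- Let (γ, ℓ, ℓ⁽²⁾) be coordinate hypersurface metric data on U with inverse blocks (P, n, n⁽²⁾), and let Y = (Y_{ab}) be an arbitrary smooth symmetric field. Define Γ̄^c_{ab} := ½P^{cd}(∂_aγ_{bd} + ∂_bγ_{ad} − ∂_dγ_{ab}) + n^c(−Y_{ab} + ½(∂_aℓ_b + ∂_bℓ_a)); K_{ab} := n⁽²⁾Y_{ab} + ½(n^c∂_cγ_{ab} + γ_{cb}∂_an^c + γ_{ac}∂_bn^c) + ½(ℓ_a∂_bn⁽²⁾ + ℓ_b∂_an⁽²⁾); φ_a := ½n⁽²⁾∂_aℓ⁽²⁾ + n^b(Y_{ab} + F_{ab}); Ψ^b_a := P^{bc}(Y_{ac} + F_{ac}) + ½n^b∂_aℓ⁽²⁾. Then Γ̄^c_{ab} = Γ̄^c_{ba}, K_{ab} = K_{ba}, the three compatibility equations ∇̄_aγ_{bc} + ℓ_bK_{ac} + ℓ_cK_{ab} = 0, ∇̄_aℓ_b − φ_aℓ_b + ℓ⁽²⁾K_{ab} − γ_{bc}Ψ^c_a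 = 0, and −½∂_aℓ⁽²⁾ + Ψ^b_aℓ_b + ℓ⁽²⁾φ_a = 0 hold, and moreover Y_{ab} = ½(∇̄_aℓ_b + ∇̄_bℓ_a) + ℓ⁽²⁾K_{ab}. Conversely, if smooth fields Γ̄^c_{ab} (symmetric in a,b), K_{ab} (symmetric), φ_a and Ψ^b_a satisfy the three compatibility equations, then they are given by the above four formulas with Y_{ab} := ½(∇̄_aℓ_b + ∇̄_bℓ_a) + ℓ⁽²⁾K_{ab}. -/
open scoped BigOperators

noncomputable section

namespace HypData

variable {m : ℕ}

/-- Scalar field on ℝ^m. -/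
abbrev Sc (m : ℕ) := (Fin m → ℝ) → ℝ
/-- One-index field. -/
abbrev Vec (m : ℕ) := (Fin m → ℝ) → Fin m → ℝ
/-- Two-index field. -/
abbrev Ten (m : ℕ) := (Fin m → ℝ) → Fin m → Fin m → ℝ
/-- Connection coefficients `Γ x c a b = Γ^c_{ab}` (first index upper). -/
abbrev Conn (m : ℕ) := (Fin m → ℝ) → Fin m → Fin m → Fin m → ℝ
/-- Three-index field. -/
abbrev Ten3 (m : ℕ) := (Fin m → ℝ) → Fin m → Fin m → Fin m → ℝ

/-- Partial derivative of `f` in the `a`-th coordinate direction at `x`. -/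
def pd (a : Fin m) (f : Sc m) (x : Fin m → ℝ) : ℝ :=
  fderiv ℝ f x (Pi.single a 1)

/-- Kronecker delta. -/
def kd (a b : Fin m) : ℝ := if a = b then 1 else 0

/-- Equations (EqP1)-(EqP4): `[[P,n],[nᵀ,n2]]` consists of the inverse blocks of
the block matrix `[[γ,ℓ],[ℓᵀ,ℓ2]]`. -/
def InvBlocks (γ : Fin m → Fin m → ℝ) (ℓ : Fin m → ℝ) (ℓ2 : ℝ)
    (P : Fin m → Fin m → ℝ) (n : Fin m → ℝ) (n2 : ℝ) : Prop :=
  (∀ a b, (∑ c, P a c * γ c b) + n a * ℓ b = kd a b) ∧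
  (∀ a, (∑ b, P a b * ℓ b) + ℓ2 * n a = 0) ∧
  ((∑ a, n a * ℓ a) + n2 * ℓ2 = 1) ∧
  (∀ a, (∑ b, γ a b * n b) + n2 * ℓ a = 0)

/-- ∇_a ω_b. -/
def covD1 (Γ : Conn m) (ω : Vec m) (x : Fin m → ℝ) (a b : Fin m) : ℝ :=
  pd a (fun y => ω y b) x - ∑ d, Γ x d a b * ω x d

/-- ∇_a X^b. -/
def covD1U (Γ : Conn m) (X : Vec m) (x : Fin m → ℝ) (a b : Fin m) : ℝ :=
  pd a (fun y => X y b) x + ∑ d, Γ x b a d * X x d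

/-- ∇_a T_{bc}. -/
def covD2 (Γ : Conn m) (T : Ten m) (x : Fin m → ℝ) (a b c : Fin m) : ℝ :=
  pd a (fun y => T y b c) x - (∑ d, Γ x d a b * T x d c) - (∑ d, Γ x d a c * T x b d)

/-- ∇_a T^{bc}. -/
def covD2U (Γ : Conn m) (T : Ten m) (x : Fin m → ℝ) (a b c : Fin m) : ℝ :=
  pd a (fun y => T y b c) x + (∑ d, Γ x b a d * T x d c) + (∑ d, Γ x c a d * T x b d)

/-- ∇_a S^b_c (first index of `S` upper, second lower). -/
def covD11 (Γ : Conn m) (S : Ten m) (x : Fin m → ℝ) (a b c : Fin m) : ℝ :=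
  pd a (fun y => S y b c) x + (∑ d, Γ x b a d * S x d c) - (∑ d, Γ x d a c * S x b d)

/-- ∇_a Q^{bcd}. -/
def covD3U (Γ : Conn m) (Q : Ten3 m) (x : Fin m → ℝ) (a b c d : Fin m) : ℝ :=
  pd a (fun y => Q y b c d) x + (∑ f, Γ x b a f * Q x f c d)
    + (∑ f, Γ x c a f * Q x b f d) + (∑ f, Γ x d a f * Q x b c f)

/-- Curvature `R^a_{bcd} = ∂_cΓ^a_{db} − ∂_dΓ^a_{cb} + Γ^a_{cf}Γ^f_{db} − Γ^a_{df}Γ^f_{cb}`. -/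
def curv (Γ : Conn m) (x : Fin m → ℝ) (a b c d : Fin m) : ℝ :=
  pd c (fun y => Γ y a d b) x - pd d (fun y => Γ y a c b) x
    + (∑ f, Γ x a c f * Γ x f d b) - (∑ f, Γ x a d f * Γ x f c b)

/-- `F_{ab} = ½(∂_aℓ_b − ∂_bℓ_a)`. -/
def Ff (ℓ : Vec m) (x : Fin m → ℝ) (a b : Fin m) : ℝ :=
  (pd a (fun y => ℓ y b) x - pd b (fun y => ℓ y a) x) / 2

/-- `U_{ab} = ½(n^c∂_cγ_{ab} + γ_{cb}∂_an^c + γ_{ac}∂_bn^c + ℓ_a∂_bn⁽²⁾ + ℓ_b∂_an⁽²⁾)`. -/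
def Uf (γ : Ten m) (ℓ : Vec m) (n : Vec m) (n2 : Sc m)
    (x : Fin m → ℝ) (a b : Fin m) : ℝ :=
  ((∑ c, (n x c * pd c (fun y => γ y a b) x + γ x c b * pd a (fun y => n y c) x
      + γ x a c * pd b (fun y => n y c) x))
    + ℓ x a * pd b n2 x + ℓ x b * pd a n2 x) / 2

/-- Metric hypersurface connection `Γ̊^c_{ab}`. -/
def Gam0 (γ : Ten m) (ℓ : Vec m) (P : Ten m) (n : Vec m)
    (x : Fin m → ℝ) (c a b : Fin m) : ℝ :=
  (∑ d, P x c d * (pd a (fun y => γ y b d) x + pd b (fun y => γ y a d) x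
      - pd d (fun y => γ y a b) x)) / 2
  + n x c * (pd a (fun y => ℓ y b) x + pd b (fun y => ℓ y a) x) / 2

/-- The connection `Γ̄^c_{ab} = Γ̊^c_{ab} − n^c Y_{ab}`. -/
def GamB (γ : Ten m) (ℓ : Vec m) (P : Ten m) (n : Vec m) (Y : Ten m)
    (x : Fin m → ℝ) (c a b : Fin m) : ℝ :=
  Gam0 γ ℓ P n x c a b - n x c * Y x a b

/-- `K_{ab} = n⁽²⁾Y_{ab} + U_{ab}`. -/
def Kf (γ : Ten m) (ℓ : Vec m) (n : Vec m) (n2 : Sc m) (Y : Ten m)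
    (x : Fin m → ℝ) (a b : Fin m) : ℝ :=
  n2 x * Y x a b + Uf γ ℓ n n2 x a b

/-- `φ_a = ½n⁽²⁾∂_aℓ⁽²⁾ + n^b(Y_{ab} + F_{ab})`. -/
def phif (ℓ : Vec m) (ℓ2 : Sc m) (n : Vec m) (n2 : Sc m) (Y : Ten m)
    (x : Fin m → ℝ) (a : Fin m) : ℝ :=
  n2 x * pd a ℓ2 x / 2 + ∑ b, n x b * (Y x a b + Ff ℓ x a b)

/-- `Ψ^b_a = P^{bc}(Y_{ac} + F_{ac}) + ½n^b∂_aℓ⁽²⁾`. -/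
def Psif (ℓ : Vec m) (ℓ2 : Sc m) (P : Ten m) (n : Vec m) (Y : Ten m)
    (x : Fin m → ℝ) (b a : Fin m) : ℝ :=
  (∑ c, P x b c * (Y x a c + Ff ℓ x a c)) + n x b * pd a ℓ2 x / 2

/-- Smoothness of a scalar field on `U`. -/
def SmSc (U : Set (Fin m → ℝ)) (f : Sc m) : Prop := ContDiffOn ℝ (⊤ : ℕ∞) f U
/-- Smoothness of a one-index field on `U`. -/
def SmVec (U : Set (Fin m → ℝ)) (f : Vec m) : Prop :=
  ∀ a, ContDiffOn ℝ (⊤ : ℕ∞) (fun x => f x a) U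
/-- Smoothness of a two-index field on `U`. -/
def SmTen (U : Set (Fin m → ℝ)) (f : Ten m) : Prop :=
  ∀ a b, ContDiffOn ℝ (⊤ : ℕ∞) (fun x => f x a b) U

/-- Smooth coordinate hypersurface metric data on `U`. -/
def MetricData (U : Set (Fin m → ℝ)) (γ : Ten m) (ℓ : Vec m) (ℓ2 : Sc m)
    (P : Ten m) (n : Vec m) (n2 : Sc m) : Prop :=
  SmTen U γ ∧ SmVec U ℓ ∧ SmSc U ℓ2 ∧ SmTen U P ∧ SmVec U n ∧ SmSc U n2 ∧
  (∀ x ∈ U, ∀ a b, γ x a b = γ x b a) ∧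
  (∀ x ∈ U, ∀ a b, P x a b = P x b a) ∧
  (∀ x ∈ U, InvBlocks (γ x) (ℓ x) (ℓ2 x) (P x) (n x) (n2 x))

/-- Gauge-transformed `ℓ`. -/
def gaugeL (γ : Ten m) (ℓ : Vec m) (u : Sc m) (V : Vec m) : Vec m :=
  fun x a => u x * (ℓ x a + ∑ b, V x b * γ x a b)

/-- Gauge-transformed `ℓ⁽²⁾`. -/
def gaugeL2 (γ : Ten m) (ℓ : Vec m) (ℓ2 : Sc m) (u : Sc m) (V : Vec m) : Sc m :=
  fun x => u x ^ 2 * (ℓ2 x + 2 * (∑ a, V x a * ℓ x a) + ∑ a, ∑ b, V x a * V x b * γ x a b)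

/-- Gauge-transformed `Y`. -/
def gaugeY (γ : Ten m) (ℓ : Vec m) (Y : Ten m) (u : Sc m) (V : Vec m) : Ten m :=
  fun x a b => u x * Y x a b + (ℓ x a * pd b u x + ℓ x b * pd a u x) / 2
    + ((u x * ∑ c, V x c * pd c (fun y => γ y a b) x)
      + (∑ c, γ x c b * pd a (fun y => u y * V y c) x)
      + (∑ c, γ x a c * pd b (fun y => u y * V y c) x)) / 2

/-- Gauge-transformed `P`. -/
def gaugeP (P : Ten m) (n : Vec m) (n2 : Sc m) (V : Vec m) : Ten m :=
  fun x a b => P x a b + n2 x * V x a * V x b - V x a * n x b - V x b * n x a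

/-- Gauge-transformed `n`. -/
def gaugeN (n : Vec m) (n2 : Sc m) (u : Sc m) (V : Vec m) : Vec m :=
  fun x a => (u x)⁻¹ * (n x a - n2 x * V x a)

/-- Gauge-transformed `n⁽²⁾`. -/
def gaugeN2 (n2 : Sc m) (u : Sc m) : Sc m :=
  fun x => ((u x) ^ 2)⁻¹ * n2 x

/-- Shell energy-momentum tensor `τ^{fa}` built pointwise from the jump `V_{ab}`. -/
def tauP (P : Fin m → Fin m → ℝ) (n : Fin m → ℝ) (n2 : ℝ) (V : Fin m → Fin m → ℝ)
    (f a : Fin m) : ℝ :=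
  (∑ c, ∑ d, (n f * P a c + n a * P f c) * n d * V c d)
  - (∑ c, ∑ d, (n2 * P f c * P a d + P f a * n c * n d) * V c d)
  + (n2 * P f a - n f * n a) * (∑ c, ∑ d, P c d * V c d)

/-- `τ^f_c = −(n⁽²⁾P^{bd} − n^bn^d)(δ^f_dV_{bc} − δ^f_cV_{bd})`. -/
def tauMixP (P : Fin m → Fin m → ℝ) (n : Fin m → ℝ) (n2 : ℝ)
    (V : Fin m → Fin m → ℝ) (f c : Fin m) : ℝ :=
  -(∑ b, ∑ d, (n2 * P b d - n b * n d) * (kd f d * V b c - kd f c * V b d))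

/-- `T^f = (P^{bf}n^c − P^{bc}n^f)V_{bc}`. -/
def tauVecP (P : Fin m → Fin m → ℝ) (n : Fin m → ℝ) (V : Fin m → Fin m → ℝ)
    (f : Fin m) : ℝ :=
  ∑ b, ∑ c, (P b f * n c - P b c * n f) * V b c

/-- The block matrix 𝔸. -/
def blockA (γ : Ten m) (ℓ : Vec m) (ℓ2 : Sc m) (x : Fin m → ℝ) :
    Matrix (Fin m ⊕ Unit) (Fin m ⊕ Unit) ℝ :=
  fun i j =>
    match i, j with
    | Sum.inl a, Sum.inl b => γ x a b
    | Sum.inl a, Sum.inr _ => ℓ x a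
    | Sum.inr _, Sum.inl b => ℓ x b
    | Sum.inr _, Sum.inr _ => ℓ2 x

/-- `det 𝔸` as a scalar field. -/
def detA (γ : Ten m) (ℓ : Vec m) (ℓ2 : Sc m) (x : Fin m → ℝ) : ℝ :=
  (blockA γ ℓ ℓ2 x).det

end HypData

namespace S2

open HypData

variable {m : ℕ}

lemma sum_kd_left (c : Fin m) (f : Fin m → ℝ) : (∑ e, kd e c * f e) = f c := by
  simp [kd, ite_mul]

lemma sum_kd_right (c : Fin m) (f : Fin m → ℝ) : (∑ e, kd c e * f e) = f c := by
  simp [kd, ite_mul, eq_comm]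

lemma fubini_mul (A : Fin m → Fin m → ℝ) (W X : Fin m → ℝ) :
    ∑ c, (∑ e, A c e * W e) * X c = ∑ e, (∑ c, A c e * X c) * W e := by
  simp_rw [Finset.sum_mul]
  rw [Finset.sum_comm]
  exact Finset.sum_congr rfl fun e _ => Finset.sum_congr rfl fun c _ => by ring

lemma fubini_mul' (A : Fin m → Fin m → ℝ) (W X : Fin m → ℝ) :
    ∑ c, X c * (∑ e, A c e * W e) = ∑ e, (∑ c, X c * A c e) * W e := by
  simp_rw [Finset.mul_sum]
  rw [Finset.sum_comm]
  exact Finset.sum_congr rfl fun e _ => by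
    rw [Finset.sum_mul]
    exact Finset.sum_congr rfl fun c _ => by ring

lemma fubini_mul2 (A : Fin m → Fin m → ℝ) (W X : Fin m → ℝ) :
    ∑ d, (∑ e, W e * A e d) * X d = ∑ e, (∑ d, A e d * X d) * W e := by
  simp_rw [Finset.sum_mul]
  rw [Finset.sum_comm]
  exact Finset.sum_congr rfl fun e _ => Finset.sum_congr rfl fun d _ => by ring

/-- pointwise mirror of `Gam0`. -/
def aG0 (Pm : Fin m → Fin m → ℝ) (nv : Fin m → ℝ) (dg : Fin m → Fin m → Fin m → ℝ)
    (dl : Fin m → Fin m → ℝ) (c a b : Fin m) : ℝ :=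
  (∑ d, Pm c d * (dg a b d + dg b a d - dg d a b)) / 2 + nv c * (dl a b + dl b a) / 2

/-- pointwise mirror of `GamB`. -/
def aGB (Pm : Fin m → Fin m → ℝ) (nv : Fin m → ℝ) (dg : Fin m → Fin m → Fin m → ℝ)
    (dl : Fin m → Fin m → ℝ) (Ym : Fin m → Fin m → ℝ) (c a b : Fin m) : ℝ := aG0 Pm nv dg dl c a b - nv c * Ym a b

/-- pointwise mirror of `Uf`. -/
def aU (gg : Fin m → Fin m → ℝ) (lv nv : Fin m → ℝ) (dg : Fin m → Fin m → Fin m → ℝ)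
    (dn : Fin m → Fin m → ℝ) (dn2 : Fin m → ℝ) (a b : Fin m) : ℝ :=
  ((∑ c, (nv c * dg c a b + gg c b * dn a c + gg a c * dn b c))
    + lv a * dn2 b + lv b * dn2 a) / 2

/-- pointwise mirror of `Kf`. -/
def aK (gg : Fin m → Fin m → ℝ) (lv nv : Fin m → ℝ) (n2 : ℝ) (Ym : Fin m → Fin m → ℝ)
    (dg : Fin m → Fin m → Fin m → ℝ) (dn : Fin m → Fin m → ℝ) (dn2 : Fin m → ℝ)
    (a b : Fin m) : ℝ := n2 * Ym a b + aU gg lv nv dg dn dn2 a b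

/-- pointwise mirror of `Ff`. -/
def aF (dl : Fin m → Fin m → ℝ) (a b : Fin m) : ℝ := (dl a b - dl b a) / 2

/-- pointwise mirror of `phif`. -/
def aphi (nv : Fin m → ℝ) (n2 : ℝ) (Ym : Fin m → Fin m → ℝ) (dl : Fin m → Fin m → ℝ)
    (dl2 : Fin m → ℝ) (a : Fin m) : ℝ :=
  n2 * dl2 a / 2 + ∑ b, nv b * (Ym a b + aF dl a b)

/-- pointwise mirror of `Psif`. -/
def aPsi (Pm : Fin m → Fin m → ℝ) (nv : Fin m → ℝ) (Ym : Fin m → Fin m → ℝ)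
    (dl : Fin m → Fin m → ℝ) (dl2 : Fin m → ℝ) (b a : Fin m) : ℝ :=
  (∑ c, Pm b c * (Ym a c + aF dl a c)) + nv b * dl2 a / 2

lemma contractG0 (Pm : Fin m → Fin m → ℝ) (nv : Fin m → ℝ) (dg : Fin m → Fin m → Fin m → ℝ)
    (dl : Fin m → Fin m → ℝ) (a b : Fin m) (X : Fin m → ℝ) :
    ∑ c, aG0 Pm nv dg dl c a b * X c
      = (∑ e, (∑ d, Pm d e * X d) * (dg a b e + dg b a e - dg e a b)) / 2
        + (∑ d, nv d * X d) * ((dl a b + dl b a) / 2) := by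
  unfold aG0
  have h1 : ∀ c : Fin m, ((∑ d, Pm c d * (dg a b d + dg b a d - dg d a b)) / 2
      + nv c * (dl a b + dl b a) / 2) * X c
      = (∑ d, (Pm c d * (dg a b d + dg b a d - dg d a b)) * X c) / 2
        + nv c * X c * ((dl a b + dl b a) / 2) := by
    intro c; rw [← Finset.sum_mul]; ring
  rw [Finset.sum_congr rfl fun c _ => h1 c, Finset.sum_add_distrib, ← Finset.sum_div,
    ← Finset.sum_mul, Finset.sum_comm]
  congr 1
  congr 1
  exact Finset.sum_congr rfl fun e _ => by
    rw [Finset.sum_mul]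
    exact Finset.sum_congr rfl fun c _ => by ring

lemma keyLA (gg : Fin m → Fin m → ℝ) (lv nv : Fin m → ℝ) (n2 : ℝ)
    (dg : Fin m → Fin m → Fin m → ℝ) (dl dn : Fin m → Fin m → ℝ) (dn2 : Fin m → ℝ)
    (hgs : ∀ a b, gg a b = gg b a)
    (hD4 : ∀ a c, (∑ b, (dg a c b * nv b + gg c b * dn a b)) + dn2 a * lv c
      + n2 * dl a c = 0)
    (a b : Fin m) :
    (∑ e, nv e * (dg a b e + dg b a e - dg e a b)) + n2 * (dl a b + dl b a)
      + ((∑ c, (nv c * dg c a b + gg c b * dn a c + gg a c * dn b c))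
        + lv a * dn2 b + lv b * dn2 a) = 0 := by
  have h4ab : (∑ e, (dg a b e * nv e)) + (∑ e, (gg b e * dn a e))
      + dn2 a * lv b + n2 * dl a b = 0 := by
    have h := hD4 a b
    rw [Finset.sum_add_distrib] at h
    linarith
  have h4ba : (∑ e, (dg b a e * nv e)) + (∑ e, (gg a e * dn b e))
      + dn2 b * lv a + n2 * dl b a = 0 := by
    have h := hD4 b a
    rw [Finset.sum_add_distrib] at h
    linarith
  have e1 : (∑ e, nv e * (dg a b e + dg b a e - dg e a b))
      = ((∑ e, (dg a b e * nv e)) + (∑ e, (dg b a e * nv e))) - ∑ e, nv e * dg e a b := by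
    rw [← Finset.sum_add_distrib, ← Finset.sum_sub_distrib]
    exact Finset.sum_congr rfl fun e _ => by ring
  have e2 : (∑ c, (nv c * dg c a b + gg c b * dn a c + gg a c * dn b c))
      = ((∑ c, nv c * dg c a b) + (∑ c, (gg b c * dn a c))) + (∑ c, (gg a c * dn b c)) := by
    rw [← Finset.sum_add_distrib, ← Finset.sum_add_distrib]
    exact Finset.sum_congr rfl fun c _ => by rw [hgs b c]
  linear_combination e1 + e2 + h4ab + h4ba

lemma sumGB_g (gg Pm Ym : Fin m → Fin m → ℝ) (lv nv : Fin m → ℝ) (n2 : ℝ)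
    (dg : Fin m → Fin m → Fin m → ℝ) (dl : Fin m → Fin m → ℝ)
    (hgs : ∀ a b, gg a b = gg b a)
    (hPs : ∀ a b, Pm a b = Pm b a)
    (h1 : ∀ a b, (∑ c, Pm a c * gg c b) + nv a * lv b = kd a b)
    (h4 : ∀ a, (∑ b, gg a b * nv b) + n2 * lv a = 0)
    (a b c : Fin m) :
    ∑ d, aGB Pm nv dg dl Ym d a b * gg d c
      = (dg a b c + dg b a c - dg c a b) / 2
        - lv c * (∑ e, nv e * (dg a b e + dg b a e - dg e a b)) / 2
        - n2 * lv c * ((dl a b + dl b a) / 2) + n2 * lv c * Ym a b := by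
  have hng : (∑ d, nv d * gg d c) = -(n2 * lv c) := by
    have h := h4 c
    have h' : (∑ d, nv d * gg d c) = ∑ d, gg c d * nv d :=
      Finset.sum_congr rfl fun d _ => by rw [hgs d c]; ring
    rw [h']; linarith
  have hPg : ∀ e : Fin m, (∑ d, Pm d e * gg d c) = kd e c - nv e * lv c := by
    intro e
    have h := h1 e c
    have h' : (∑ d, Pm d e * gg d c) = ∑ d, Pm e d * gg d c :=
      Finset.sum_congr rfl fun d _ => by rw [hPs d e]
    rw [h']; linarith
  have hsplit : ∑ d, aGB Pm nv dg dl Ym d a b * gg d c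
      = (∑ d, aG0 Pm nv dg dl d a b * gg d c) - (∑ d, nv d * gg d c) * Ym a b := by
    rw [Finset.sum_mul, ← Finset.sum_sub_distrib]
    exact Finset.sum_congr rfl fun d _ => by unfold aGB; ring
  rw [hsplit, contractG0, hng]
  have h5 : (∑ e, (∑ d, Pm d e * gg d c) * (dg a b e + dg b a e - dg e a b))
      = (dg a b c + dg b a c - dg c a b)
        - (∑ e, nv e * (dg a b e + dg b a e - dg e a b)) * lv c := by
    have s1 : (∑ e, (∑ d, Pm d e * gg d c) * (dg a b e + dg b a e - dg e a b))
        = ∑ e, (kd e c * (dg a b e + dg b a e - dg e a b)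
            - (nv e * (dg a b e + dg b a e - dg e a b)) * lv c) :=
      Finset.sum_congr rfl fun e _ => by rw [hPg e]; ring
    rw [s1, Finset.sum_sub_distrib, ← Finset.sum_mul, sum_kd_left]
  rw [h5]; ring

lemma sumGB_l (Pm Ym : Fin m → Fin m → ℝ) (lv nv : Fin m → ℝ) (l2 n2 : ℝ)
    (dg : Fin m → Fin m → Fin m → ℝ) (dl : Fin m → Fin m → ℝ)
    (hPs : ∀ a b, Pm a b = Pm b a)
    (h2 : ∀ a, (∑ b, Pm a b * lv b) + l2 * nv a = 0)
    (h3 : (∑ a, nv a * lv a) + n2 * l2 = 1)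
    (a b : Fin m) :
    ∑ d, aGB Pm nv dg dl Ym d a b * lv d
      = -(l2 * (∑ e, nv e * (dg a b e + dg b a e - dg e a b))) / 2
        + (1 - n2 * l2) * ((dl a b + dl b a) / 2) - (1 - n2 * l2) * Ym a b := by
  have hnl : (∑ d, nv d * lv d) = 1 - n2 * l2 := by linarith [h3]
  have hPl : ∀ e : Fin m, (∑ d, Pm d e * lv d) = -(l2 * nv e) := by
    intro e
    have h := h2 e
    have h' : (∑ d, Pm d e * lv d) = ∑ d, Pm e d * lv d :=
      Finset.sum_congr rfl fun d _ => by rw [hPs d e]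
    rw [h']; linarith
  have hsplit : ∑ d, aGB Pm nv dg dl Ym d a b * lv d
      = (∑ d, aG0 Pm nv dg dl d a b * lv d) - (∑ d, nv d * lv d) * Ym a b := by
    rw [Finset.sum_mul, ← Finset.sum_sub_distrib]
    exact Finset.sum_congr rfl fun d _ => by unfold aGB; ring
  rw [hsplit, contractG0, hnl]
  have h5 : (∑ e, (∑ d, Pm d e * lv d) * (dg a b e + dg b a e - dg e a b))
      = -(l2 * (∑ e, nv e * (dg a b e + dg b a e - dg e a b))) := by
    have s1 : (∑ e, (∑ d, Pm d e * lv d) * (dg a b e + dg b a e - dg e a b))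
        = ∑ e, -(l2 * (nv e * (dg a b e + dg b a e - dg e a b))) :=
      Finset.sum_congr rfl fun e _ => by rw [hPl e]; ring
    rw [s1, Finset.sum_neg_distrib, ← Finset.mul_sum]
  rw [h5]

lemma aGB_symm (Pm Ym : Fin m → Fin m → ℝ) (nv : Fin m → ℝ)
    (dg : Fin m → Fin m → Fin m → ℝ) (dl : Fin m → Fin m → ℝ)
    (hdgs : ∀ a b c, dg a b c = dg a c b)
    (hY : ∀ a b, Ym a b = Ym b a)
    (c a b : Fin m) :
    aGB Pm nv dg dl Ym c a b = aGB Pm nv dg dl Ym c b a := by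
  unfold aGB aG0
  have h : (∑ d, Pm c d * (dg a b d + dg b a d - dg d a b))
      = (∑ d, Pm c d * (dg b a d + dg a b d - dg d b a)) :=
    Finset.sum_congr rfl fun d _ => by rw [hdgs d a b]; ring
  rw [h, hY a b]; ring

lemma aK_symm (gg Ym : Fin m → Fin m → ℝ) (lv nv : Fin m → ℝ) (n2 : ℝ)
    (dg : Fin m → Fin m → Fin m → ℝ) (dn : Fin m → Fin m → ℝ) (dn2 : Fin m → ℝ)
    (hgs : ∀ a b, gg a b = gg b a)
    (hdgs : ∀ a b c, dg a b c = dg a c b)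
    (hY : ∀ a b, Ym a b = Ym b a)
    (a b : Fin m) :
    aK gg lv nv n2 Ym dg dn dn2 a b = aK gg lv nv n2 Ym dg dn dn2 b a := by
  unfold aK aU
  have h : (∑ c, (nv c * dg c a b + gg c b * dn a c + gg a c * dn b c))
      = (∑ c, (nv c * dg c b a + gg c a * dn b c + gg b c * dn a c)) :=
    Finset.sum_congr rfl fun c _ => by rw [hdgs c a b, hgs c b, hgs a c]; ring
  rw [h, hY a b]; ring

lemma direct_eq1 (gg Pm Ym : Fin m → Fin m → ℝ) (lv nv : Fin m → ℝ) (n2 : ℝ)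
    (dg : Fin m → Fin m → Fin m → ℝ) (dl dn : Fin m → Fin m → ℝ) (dn2 : Fin m → ℝ)
    (hgs : ∀ a b, gg a b = gg b a)
    (hPs : ∀ a b, Pm a b = Pm b a)
    (h1 : ∀ a b, (∑ c, Pm a c * gg c b) + nv a * lv b = kd a b)
    (h4 : ∀ a, (∑ b, gg a b * nv b) + n2 * lv a = 0)
    (hdgs : ∀ a b c, dg a b c = dg a c b)
    (hD4 : ∀ a c, (∑ b, (dg a c b * nv b + gg c b * dn a b)) + dn2 a * lv c
      + n2 * dl a c = 0)
    (a b c : Fin m) :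
    dg a b c - (∑ d, aGB Pm nv dg dl Ym d a b * gg d c)
      - (∑ d, aGB Pm nv dg dl Ym d a c * gg b d)
      + lv b * aK gg lv nv n2 Ym dg dn dn2 a c
      + lv c * aK gg lv nv n2 Ym dg dn dn2 a b = 0 := by
  have conv : (∑ d, aGB Pm nv dg dl Ym d a c * gg b d)
      = ∑ d, aGB Pm nv dg dl Ym d a c * gg d b :=
    Finset.sum_congr rfl fun d _ => by rw [hgs b d]
  rw [conv, sumGB_g gg Pm Ym lv nv n2 dg dl hgs hPs h1 h4 a b c,
    sumGB_g gg Pm Ym lv nv n2 dg dl hgs hPs h1 h4 a c b]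
  unfold aK aU
  linear_combination (lv c / 2) * keyLA gg lv nv n2 dg dl dn dn2 hgs hD4 a b
    + (lv b / 2) * keyLA gg lv nv n2 dg dl dn dn2 hgs hD4 a c
    + (1 / 2 : ℝ) * hdgs a b c

lemma direct_eq2' (gg Pm Ym : Fin m → Fin m → ℝ) (lv nv : Fin m → ℝ) (l2 n2 : ℝ)
    (dg : Fin m → Fin m → Fin m → ℝ) (dl dn : Fin m → Fin m → ℝ) (dn2 : Fin m → ℝ)
    (hgs : ∀ a b, gg a b = gg b a)
    (hPs : ∀ a b, Pm a b = Pm b a)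
    (h2 : ∀ a, (∑ b, Pm a b * lv b) + l2 * nv a = 0)
    (h3 : (∑ a, nv a * lv a) + n2 * l2 = 1)
    (hD4 : ∀ a c, (∑ b, (dg a c b * nv b + gg c b * dn a b)) + dn2 a * lv c
      + n2 * dl a c = 0)
    (a b : Fin m) :
    dl a b - (∑ d, aGB Pm nv dg dl Ym d a b * lv d)
      = Ym a b + aF dl a b - l2 * aK gg lv nv n2 Ym dg dn dn2 a b := by
  rw [sumGB_l Pm Ym lv nv l2 n2 dg dl hPs h2 h3 a b]
  unfold aK aU aF
  linear_combination (l2 / 2) * keyLA gg lv nv n2 dg dl dn dn2 hgs hD4 a b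

lemma sum_g_Psi (gg Pm Ym : Fin m → Fin m → ℝ) (lv nv : Fin m → ℝ) (n2 : ℝ)
    (dl : Fin m → Fin m → ℝ) (dl2 : Fin m → ℝ)
    (hgs : ∀ a b, gg a b = gg b a)
    (hPs : ∀ a b, Pm a b = Pm b a)
    (h1 : ∀ a b, (∑ c, Pm a c * gg c b) + nv a * lv b = kd a b)
    (h4 : ∀ a, (∑ b, gg a b * nv b) + n2 * lv a = 0)
    (a b : Fin m) :
    (∑ c, gg b c * aPsi Pm nv Ym dl dl2 c a)
      = (Ym a b + aF dl a b) - lv b * (∑ e, nv e * (Ym a e + aF dl a e))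
        - n2 * lv b * (dl2 a / 2) := by
  have hgn : (∑ c, gg b c * nv c) = -(n2 * lv b) := by
    have := h4 b; linarith
  have hgP : ∀ e : Fin m, (∑ c, gg b c * Pm c e) = kd b e - lv b * nv e := by
    intro e
    have h := h1 e b
    have h' : (∑ c, gg b c * Pm c e) = ∑ c, Pm e c * gg c b :=
      Finset.sum_congr rfl fun c _ => by rw [hgs b c, hPs c e]; ring
    have hk : kd b e = kd e b := by simp [kd, eq_comm]
    rw [h', hk]; linarith
  unfold aPsi
  have s1 : (∑ c, gg b c * ((∑ e, Pm c e * (Ym a e + aF dl a e)) + nv c * dl2 a / 2))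
      = (∑ c, gg b c * (∑ e, Pm c e * (Ym a e + aF dl a e)))
        + (∑ c, gg b c * nv c) * (dl2 a / 2) := by
    rw [Finset.sum_mul, ← Finset.sum_add_distrib]
    exact Finset.sum_congr rfl fun c _ => by ring
  rw [s1, fubini_mul', hgn]
  have s2 : (∑ e, (∑ c, gg b c * Pm c e) * (Ym a e + aF dl a e))
      = ∑ e, (kd b e * (Ym a e + aF dl a e)
            - (nv e * (Ym a e + aF dl a e)) * lv b) :=
    Finset.sum_congr rfl fun e _ => by rw [hgP e]; ring
  rw [s2, Finset.sum_sub_distrib, ← Finset.sum_mul, sum_kd_right]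
  ring

lemma direct_eq2 (gg Pm Ym : Fin m → Fin m → ℝ) (lv nv : Fin m → ℝ) (l2 n2 : ℝ)
    (dg : Fin m → Fin m → Fin m → ℝ) (dl dn : Fin m → Fin m → ℝ) (dn2 dl2 : Fin m → ℝ)
    (hgs : ∀ a b, gg a b = gg b a)
    (hPs : ∀ a b, Pm a b = Pm b a)
    (h1 : ∀ a b, (∑ c, Pm a c * gg c b) + nv a * lv b = kd a b)
    (h2 : ∀ a, (∑ b, Pm a b * lv b) + l2 * nv a = 0)
    (h3 : (∑ a, nv a * lv a) + n2 * l2 = 1)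
    (h4 : ∀ a, (∑ b, gg a b * nv b) + n2 * lv a = 0)
    (hD4 : ∀ a c, (∑ b, (dg a c b * nv b + gg c b * dn a b)) + dn2 a * lv c
      + n2 * dl a c = 0)
    (a b : Fin m) :
    dl a b - (∑ d, aGB Pm nv dg dl Ym d a b * lv d)
      - aphi nv n2 Ym dl dl2 a * lv b
      + l2 * aK gg lv nv n2 Ym dg dn dn2 a b
      - (∑ c, gg b c * aPsi Pm nv Ym dl dl2 c a) = 0 := by
  rw [sum_g_Psi gg Pm Ym lv nv n2 dl dl2 hgs hPs h1 h4 a b]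
  have h := direct_eq2' gg Pm Ym lv nv l2 n2 dg dl dn dn2 hgs hPs h2 h3 hD4 a b
  unfold aphi
  linear_combination h

lemma direct_eq3 (Pm Ym : Fin m → Fin m → ℝ) (lv nv : Fin m → ℝ) (l2 n2 : ℝ)
    (dl : Fin m → Fin m → ℝ) (dl2 : Fin m → ℝ)
    (hPs : ∀ a b, Pm a b = Pm b a)
    (h2 : ∀ a, (∑ b, Pm a b * lv b) + l2 * nv a = 0)
    (h3 : (∑ a, nv a * lv a) + n2 * l2 = 1)
    (a : Fin m) :
    -(dl2 a) / 2 + (∑ c, aPsi Pm nv Ym dl dl2 c a * lv c)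
      + l2 * aphi nv n2 Ym dl dl2 a = 0 := by
  have hnl : (∑ d, nv d * lv d) = 1 - n2 * l2 := by linarith [h3]
  have hPl : ∀ e : Fin m, (∑ c, Pm c e * lv c) = -(l2 * nv e) := by
    intro e
    have h := h2 e
    have h' : (∑ c, Pm c e * lv c) = ∑ c, Pm e c * lv c :=
      Finset.sum_congr rfl fun c _ => by rw [hPs c e]
    rw [h']; linarith
  have s0 : (∑ c, aPsi Pm nv Ym dl dl2 c a * lv c)
      = (∑ c, (∑ e, Pm c e * (Ym a e + aF dl a e)) * lv c)
        + (∑ c, nv c * lv c) * (dl2 a / 2) := by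
    rw [Finset.sum_mul, ← Finset.sum_add_distrib]
    exact Finset.sum_congr rfl fun c _ => by unfold aPsi; ring
  rw [s0, fubini_mul, hnl]
  have s2 : (∑ e, (∑ c, Pm c e * lv c) * (Ym a e + aF dl a e))
      = -(l2 * ∑ e, nv e * (Ym a e + aF dl a e)) := by
    have s1 : (∑ e, (∑ c, Pm c e * lv c) * (Ym a e + aF dl a e))
        = ∑ e, -(l2 * (nv e * (Ym a e + aF dl a e))) :=
      Finset.sum_congr rfl fun e _ => by rw [hPl e]; ring
    rw [s1, Finset.sum_neg_distrib, ← Finset.mul_sum]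
  rw [s2]
  unfold aphi
  ring

lemma direct_Yrec (gg Pm Ym : Fin m → Fin m → ℝ) (lv nv : Fin m → ℝ) (l2 n2 : ℝ)
    (dg : Fin m → Fin m → Fin m → ℝ) (dl dn : Fin m → Fin m → ℝ) (dn2 : Fin m → ℝ)
    (hgs : ∀ a b, gg a b = gg b a)
    (hPs : ∀ a b, Pm a b = Pm b a)
    (h2 : ∀ a, (∑ b, Pm a b * lv b) + l2 * nv a = 0)
    (h3 : (∑ a, nv a * lv a) + n2 * l2 = 1)
    (hdgs : ∀ a b c, dg a b c = dg a c b)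
    (hD4 : ∀ a c, (∑ b, (dg a c b * nv b + gg c b * dn a b)) + dn2 a * lv c
      + n2 * dl a c = 0)
    (hY : ∀ a b, Ym a b = Ym b a)
    (a b : Fin m) :
    Ym a b = ((dl a b - (∑ d, aGB Pm nv dg dl Ym d a b * lv d))
        + (dl b a - (∑ d, aGB Pm nv dg dl Ym d b a * lv d))) / 2
      + l2 * aK gg lv nv n2 Ym dg dn dn2 a b := by
  have hKsym := aK_symm gg Ym lv nv n2 dg dn dn2 hgs hdgs hY a b
  have hFas : aF dl a b + aF dl b a = 0 := by unfold aF; ring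
  rw [direct_eq2' gg Pm Ym lv nv l2 n2 dg dl dn dn2 hgs hPs h2 h3 hD4 a b,
    direct_eq2' gg Pm Ym lv nv l2 n2 dg dl dn dn2 hgs hPs h2 h3 hD4 b a]
  linear_combination (1 / 2 : ℝ) * hY a b - (1 / 2 : ℝ) * hFas - (l2 / 2) * hKsym

section Converse

variable {m : ℕ} (gg Pm Ym Km Psim : Fin m → Fin m → ℝ) (lv nv phim : Fin m → ℝ)
  (l2 n2 : ℝ) (Gm : Fin m → Fin m → Fin m → ℝ)
  (dg : Fin m → Fin m → Fin m → ℝ) (dl dn : Fin m → Fin m → ℝ) (dn2 dl2 : Fin m → ℝ)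

lemma koszul
    (hgs : ∀ a b, gg a b = gg b a)
    (hGs : ∀ c a b, Gm c a b = Gm c b a)
    (hKs : ∀ a b, Km a b = Km b a)
    (ce1 : ∀ a b c, dg a b c - (∑ d, Gm d a b * gg d c) - (∑ d, Gm d a c * gg b d)
      + lv b * Km a c + lv c * Km a b = 0)
    (a b e : Fin m) :
    dg a b e + dg b a e - dg e a b
      = 2 * (∑ d, Gm d a b * gg d e) - 2 * lv e * Km a b := by
  have t1 := ce1 a b e
  have t2 := ce1 b a e
  have t3 := ce1 e a b
  have u1 : (∑ d, Gm d b a * gg d e) = ∑ d, Gm d a b * gg d e :=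
    Finset.sum_congr rfl fun d _ => by rw [hGs d b a]
  have u2 : (∑ d, Gm d e b * gg a d) = ∑ d, Gm d b e * gg a d :=
    Finset.sum_congr rfl fun d _ => by rw [hGs d e b]
  have u3 : (∑ d, Gm d e a * gg d b) = ∑ d, Gm d a e * gg b d :=
    Finset.sum_congr rfl fun d _ => by rw [hGs d e a, hgs d b]
  linear_combination t1 + t2 - t3 + u1 - u2 - u3 - lv b * hKs a e - lv a * hKs b e
    - lv e * hKs b a

lemma conv_Gam
    (hgs : ∀ a b, gg a b = gg b a)
    (hPs : ∀ a b, Pm a b = Pm b a)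
    (h1 : ∀ a b, (∑ c, Pm a c * gg c b) + nv a * lv b = kd a b)
    (h2 : ∀ a, (∑ b, Pm a b * lv b) + l2 * nv a = 0)
    (hGs : ∀ c a b, Gm c a b = Gm c b a)
    (hKs : ∀ a b, Km a b = Km b a)
    (ce1 : ∀ a b c, dg a b c - (∑ d, Gm d a b * gg d c) - (∑ d, Gm d a c * gg b d)
      + lv b * Km a c + lv c * Km a b = 0)
    (hYdef : ∀ a b, Ym a b = ((dl a b - ∑ d, Gm d a b * lv d)
      + (dl b a - ∑ d, Gm d b a * lv d)) / 2 + l2 * Km a b)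
    (c a b : Fin m) :
    Gm c a b = aGB Pm nv dg dl Ym c a b := by
  have hu : (∑ d, Gm d b a * lv d) = ∑ d, Gm d a b * lv d :=
    Finset.sum_congr rfl fun d _ => by rw [hGs d b a]
  have hPl : (∑ d, Pm c d * lv d) = -(l2 * nv c) := by linarith [h2 c]
  have hgP : ∀ e : Fin m, (∑ d, gg e d * Pm c d) = kd c e - nv c * lv e := by
    intro e
    have h := h1 c e
    have h' : (∑ d, gg e d * Pm c d) = ∑ d, Pm c d * gg d e :=
      Finset.sum_congr rfl fun d _ => by rw [hgs e d]; ring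
    rw [h']; linarith
  have hPC : (∑ d, Pm c d * (dg a b d + dg b a d - dg d a b))
      = 2 * Gm c a b - 2 * nv c * (∑ e, Gm e a b * lv e) + 2 * l2 * nv c * Km a b := by
    have s1 : (∑ d, Pm c d * (dg a b d + dg b a d - dg d a b))
        = ∑ d, ((∑ e, Gm e a b * gg e d) * Pm c d * 2
            - Pm c d * lv d * (2 * Km a b)) :=
      Finset.sum_congr rfl fun d _ => by
        rw [koszul gg Km lv Gm dg hgs hGs hKs ce1 a b d]; ring
    rw [s1, Finset.sum_sub_distrib, ← Finset.sum_mul, ← Finset.sum_mul, fubini_mul2,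
      hPl]
    have s3 : (∑ e, (∑ d, gg e d * Pm c d) * Gm e a b)
        = ∑ e, (kd c e * Gm e a b - (Gm e a b * lv e) * nv c) :=
      Finset.sum_congr rfl fun e _ => by rw [hgP e]; ring
    rw [s3, Finset.sum_sub_distrib, ← Finset.sum_mul, sum_kd_right]
    ring
  unfold aGB aG0
  rw [hPC, hYdef a b, hu]
  ring

lemma conv_K
    (hgs : ∀ a b, gg a b = gg b a)
    (h3 : (∑ a, nv a * lv a) + n2 * l2 = 1)
    (h4 : ∀ a, (∑ b, gg a b * nv b) + n2 * lv a = 0)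
    (hGs : ∀ c a b, Gm c a b = Gm c b a)
    (hKs : ∀ a b, Km a b = Km b a)
    (ce1 : ∀ a b c, dg a b c - (∑ d, Gm d a b * gg d c) - (∑ d, Gm d a c * gg b d)
      + lv b * Km a c + lv c * Km a b = 0)
    (hD4 : ∀ a c, (∑ b, (dg a c b * nv b + gg c b * dn a b)) + dn2 a * lv c
      + n2 * dl a c = 0)
    (hYdef : ∀ a b, Ym a b = ((dl a b - ∑ d, Gm d a b * lv d)
      + (dl b a - ∑ d, Gm d b a * lv d)) / 2 + l2 * Km a b)
    (a b : Fin m) :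
    Km a b = aK gg lv nv n2 Ym dg dn dn2 a b := by
  have hnl : (∑ d, nv d * lv d) = 1 - n2 * l2 := by linarith [h3]
  have hu : (∑ d, Gm d b a * lv d) = ∑ d, Gm d a b * lv d :=
    Finset.sum_congr rfl fun d _ => by rw [hGs d b a]
  have hgn : ∀ e : Fin m, (∑ d, gg e d * nv d) = -(n2 * lv e) := by
    intro e; linarith [h4 e]
  have hA : (∑ e, nv e * (dg a b e + dg b a e - dg e a b))
      = -2 * n2 * (∑ e, Gm e a b * lv e) - 2 * (1 - n2 * l2) * Km a b := by
    have s1 : (∑ e, nv e * (dg a b e + dg b a e - dg e a b))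
        = ∑ d, ((∑ e, Gm e a b * gg e d) * nv d * 2 - nv d * lv d * (2 * Km a b)) :=
      Finset.sum_congr rfl fun d _ => by
        rw [koszul gg Km lv Gm dg hgs hGs hKs ce1 a b d]; ring
    rw [s1, Finset.sum_sub_distrib, ← Finset.sum_mul, ← Finset.sum_mul, fubini_mul2,
      hnl]
    have s3 : (∑ e, (∑ d, gg e d * nv d) * Gm e a b)
        = ∑ e, -((Gm e a b * lv e) * n2) :=
      Finset.sum_congr rfl fun e _ => by rw [hgn e]; ring
    rw [s3, Finset.sum_neg_distrib, ← Finset.sum_mul]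
    ring
  unfold aK aU
  rw [hYdef a b, hu]
  linear_combination (-(1 : ℝ) / 2) * keyLA gg lv nv n2 dg dl dn dn2 hgs hD4 a b
    + (1 / 2 : ℝ) * hA

lemma conv_W
    (hGs : ∀ c a b, Gm c a b = Gm c b a)
    (ce2 : ∀ a b, dl a b - (∑ d, Gm d a b * lv d) - phim a * lv b + l2 * Km a b
      - (∑ c, gg b c * Psim c a) = 0)
    (hYdef : ∀ a b, Ym a b = ((dl a b - ∑ d, Gm d a b * lv d)
      + (dl b a - ∑ d, Gm d b a * lv d)) / 2 + l2 * Km a b)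
    (a b : Fin m) :
    Ym a b + aF dl a b = phim a * lv b + (∑ c, gg b c * Psim c a) := by
  have hu : (∑ d, Gm d b a * lv d) = ∑ d, Gm d a b * lv d :=
    Finset.sum_congr rfl fun d _ => by rw [hGs d b a]
  have h := ce2 a b
  rw [hYdef a b]
  unfold aF
  linear_combination h - (1 / 2 : ℝ) * hu

lemma conv_phi
    (hgs : ∀ a b, gg a b = gg b a)
    (h3 : (∑ a, nv a * lv a) + n2 * l2 = 1)
    (h4 : ∀ a, (∑ b, gg a b * nv b) + n2 * lv a = 0)
    (hGs : ∀ c a b, Gm c a b = Gm c b a)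
    (ce2 : ∀ a b, dl a b - (∑ d, Gm d a b * lv d) - phim a * lv b + l2 * Km a b
      - (∑ c, gg b c * Psim c a) = 0)
    (ce3 : ∀ a, -(dl2 a) / 2 + (∑ c, Psim c a * lv c) + l2 * phim a = 0)
    (hYdef : ∀ a b, Ym a b = ((dl a b - ∑ d, Gm d a b * lv d)
      + (dl b a - ∑ d, Gm d b a * lv d)) / 2 + l2 * Km a b)
    (a : Fin m) :
    phim a = aphi nv n2 Ym dl dl2 a := by
  have hnl : (∑ b, nv b * lv b) = 1 - n2 * l2 := by linarith [h3]
  have s1 : (∑ b, nv b * (Ym a b + aF dl a b))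
      = ∑ b, nv b * (phim a * lv b + (∑ c, gg b c * Psim c a)) :=
    Finset.sum_congr rfl fun b _ => by
      rw [conv_W gg Ym Km Psim lv phim l2 Gm dl hGs ce2 hYdef a b]
  have s2 : (∑ b, nv b * (phim a * lv b + (∑ c, gg b c * Psim c a)))
      = (∑ b, nv b * lv b) * phim a + ∑ e, (∑ b, nv b * gg b e) * Psim e a := by
    have p : ∀ b : Fin m, nv b * (phim a * lv b + (∑ c, gg b c * Psim c a))
        = nv b * lv b * phim a + nv b * (∑ c, gg b c * Psim c a) := fun b => by ring
    rw [Finset.sum_congr rfl fun b _ => p b, Finset.sum_add_distrib, ← Finset.sum_mul,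
      fubini_mul']
  have hng : ∀ e : Fin m, (∑ b, nv b * gg b e) = -(n2 * lv e) := by
    intro e
    have h' : (∑ b, nv b * gg b e) = ∑ b, gg e b * nv b :=
      Finset.sum_congr rfl fun b _ => by rw [hgs b e]; ring
    rw [h']; linarith [h4 e]
  have s3 : (∑ e, (∑ b, nv b * gg b e) * Psim e a)
      = ∑ e, -((Psim e a * lv e) * n2) :=
    Finset.sum_congr rfl fun e _ => by rw [hng e]; ring
  unfold aphi
  rw [s1, s2, s3, Finset.sum_neg_distrib, ← Finset.sum_mul, hnl]
  linear_combination n2 * ce3 a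

lemma conv_Psi
    (hPs : ∀ a b, Pm a b = Pm b a)
    (h1 : ∀ a b, (∑ c, Pm a c * gg c b) + nv a * lv b = kd a b)
    (h2 : ∀ a, (∑ b, Pm a b * lv b) + l2 * nv a = 0)
    (hGs : ∀ c a b, Gm c a b = Gm c b a)
    (ce2 : ∀ a b, dl a b - (∑ d, Gm d a b * lv d) - phim a * lv b + l2 * Km a b
      - (∑ c, gg b c * Psim c a) = 0)
    (ce3 : ∀ a, -(dl2 a) / 2 + (∑ c, Psim c a * lv c) + l2 * phim a = 0)
    (hYdef : ∀ a b, Ym a b = ((dl a b - ∑ d, Gm d a b * lv d)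
      + (dl b a - ∑ d, Gm d b a * lv d)) / 2 + l2 * Km a b)
    (b a : Fin m) :
    Psim b a = aPsi Pm nv Ym dl dl2 b a := by
  have s1 : (∑ c, Pm b c * (Ym a c + aF dl a c))
      = ∑ c, Pm b c * (phim a * lv c + (∑ e, gg c e * Psim e a)) :=
    Finset.sum_congr rfl fun c _ => by
      rw [conv_W gg Ym Km Psim lv phim l2 Gm dl hGs ce2 hYdef a c]
  have s2 : (∑ c, Pm b c * (phim a * lv c + (∑ e, gg c e * Psim e a)))
      = (∑ c, Pm b c * lv c) * phim a + ∑ e, (∑ c, Pm b c * gg c e) * Psim e a := by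
    have p : ∀ c : Fin m, Pm b c * (phim a * lv c + (∑ e, gg c e * Psim e a))
        = Pm b c * lv c * phim a + Pm b c * (∑ e, gg c e * Psim e a) := fun c => by ring
    rw [Finset.sum_congr rfl fun c _ => p c, Finset.sum_add_distrib, ← Finset.sum_mul,
      fubini_mul']
  have hPl : (∑ c, Pm b c * lv c) = -(l2 * nv b) := by linarith [h2 b]
  have hPg : ∀ e : Fin m, (∑ c, Pm b c * gg c e) = kd b e - nv b * lv e := by
    intro e; linarith [h1 b e]
  have s3 : (∑ e, (∑ c, Pm b c * gg c e) * Psim e a)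
      = ∑ e, (kd b e * Psim e a - (Psim e a * lv e) * nv b) :=
    Finset.sum_congr rfl fun e _ => by rw [hPg e]; ring
  unfold aPsi
  rw [s1, s2, s3, Finset.sum_sub_distrib, ← Finset.sum_mul, sum_kd_right, hPl]
  linear_combination nv b * ce3 a

end Converse

-- Calculus helpers for `pd`.

lemma pd_congr {U : Set (Fin m → ℝ)} (hU : IsOpen U) {x : Fin m → ℝ} (hx : x ∈ U)
    {f g : Sc m} (h : ∀ y ∈ U, f y = g y) (a : Fin m) : pd a f x = pd a g x := by
  unfold pd
  rw [Filter.EventuallyEq.fderiv_eq (Filter.eventuallyEq_of_mem (hU.mem_nhds hx) h)]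

lemma pd_zero (a : Fin m) (x : Fin m → ℝ) : pd a (fun _ => (0:ℝ)) x = 0 := by
  simp [pd]

lemma pd_add (a : Fin m) {x : Fin m → ℝ} {f g : Sc m}
    (hf : DifferentiableAt ℝ f x) (hg : DifferentiableAt ℝ g x) :
    pd a (fun y => f y + g y) x = pd a f x + pd a g x := by
  simp [pd, fderiv_fun_add hf hg]

lemma pd_mul (a : Fin m) {x : Fin m → ℝ} {f g : Sc m}
    (hf : DifferentiableAt ℝ f x) (hg : DifferentiableAt ℝ g x) :
    pd a (fun y => f y * g y) x = f x * pd a g x + g x * pd a f x := by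
  simp [pd, fderiv_fun_mul hf hg]

lemma pd_sum (a : Fin m) {x : Fin m → ℝ} (f : Fin m → Sc m)
    (h : ∀ i ∈ Finset.univ, DifferentiableAt ℝ (f i) x) :
    pd a (fun y => ∑ i, f i y) x = ∑ i, pd a (f i) x := by
  simp [pd, fderiv_fun_sum h]

end S2


open HypData in
/-- Proposition 1 of the paper.  Given metric hypersurface data and an
arbitrary symmetric `Y_{ab}`, the fields `Γ̄, K, φ, Ψ` defined by (GambProp)-(PsiProp)
give a torsion-free connection solving the compatibility equations, and conversely
every solution of the compatibility equations is of this form with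
`Y_{ab} = ½(∇̄_aℓ_b + ∇̄_bℓ_a) + ℓ⁽²⁾K_{ab}`. -/
theorem statement2 (m : ℕ) (hm : 1 ≤ m) (U : Set (Fin m → ℝ)) (hU : IsOpen U)
    (γ : Ten m) (ℓ : Vec m) (ℓ2 : Sc m) (P : Ten m) (n : Vec m) (n2 : Sc m)
    (hdata : MetricData U γ ℓ ℓ2 P n n2) :
    -- direct part: the fields defined from an arbitrary smooth symmetric Y solve the system
    (∀ Y : Ten m, SmTen U Y → (∀ x ∈ U, ∀ a b, Y x a b = Y x b a) →
      ((∀ x ∈ U, ∀ c a b, GamB γ ℓ P n Y x c a b = GamB γ ℓ P n Y x c b a)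
      ∧ (∀ x ∈ U, ∀ a b, Kf γ ℓ n n2 Y x a b = Kf γ ℓ n n2 Y x b a)
      ∧ (∀ x ∈ U, ∀ a b c,
          covD2 (GamB γ ℓ P n Y) γ x a b c + ℓ x b * Kf γ ℓ n n2 Y x a c
            + ℓ x c * Kf γ ℓ n n2 Y x a b = 0)
      ∧ (∀ x ∈ U, ∀ a b,
          covD1 (GamB γ ℓ P n Y) ℓ x a b - phif ℓ ℓ2 n n2 Y x a * ℓ x b
            + ℓ2 x * Kf γ ℓ n n2 Y x a b
            - (∑ c, γ x b c * Psif ℓ ℓ2 P n Y x c a) = 0)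
      ∧ (∀ x ∈ U, ∀ a,
          -(pd a ℓ2 x) / 2 + (∑ c, Psif ℓ ℓ2 P n Y x c a * ℓ x c)
            + ℓ2 x * phif ℓ ℓ2 n n2 Y x a = 0)
      ∧ (∀ x ∈ U, ∀ a b,
          Y x a b = (covD1 (GamB γ ℓ P n Y) ℓ x a b
              + covD1 (GamB γ ℓ P n Y) ℓ x b a) / 2
            + ℓ2 x * Kf γ ℓ n n2 Y x a b)))
    ∧
    -- converse part: any solution of the compatibility equations arises this way
    (∀ (Γ : Conn m) (K : Ten m) (φ : Vec m) (Ψ : Ten m),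
      (∀ x ∈ U, ∀ c a b, Γ x c a b = Γ x c b a) →
      (∀ x ∈ U, ∀ a b, K x a b = K x b a) →
      (∀ x ∈ U, ∀ a b c,
        covD2 Γ γ x a b c + ℓ x b * K x a c + ℓ x c * K x a b = 0) →
      (∀ x ∈ U, ∀ a b,
        covD1 Γ ℓ x a b - φ x a * ℓ x b + ℓ2 x * K x a b
          - (∑ c, γ x b c * Ψ x c a) = 0) →
      (∀ x ∈ U, ∀ a,
        -(pd a ℓ2 x) / 2 + (∑ c, Ψ x c a * ℓ x c) + ℓ2 x * φ x a = 0) →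
      ∃ Y : Ten m,
        (∀ x ∈ U, ∀ a b, Y x a b = Y x b a) ∧
        (∀ x ∈ U, ∀ a b,
          Y x a b = (covD1 Γ ℓ x a b + covD1 Γ ℓ x b a) / 2 + ℓ2 x * K x a b) ∧
        (∀ x ∈ U, ∀ c a b, Γ x c a b = GamB γ ℓ P n Y x c a b) ∧
        (∀ x ∈ U, ∀ a b, K x a b = Kf γ ℓ n n2 Y x a b) ∧
        (∀ x ∈ U, ∀ a, φ x a = phif ℓ ℓ2 n n2 Y x a) ∧
        (∀ x ∈ U, ∀ b a, Ψ x b a = Psif ℓ ℓ2 P n Y x b a)) := by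
  obtain ⟨hsγ, hsℓ, hsℓ2, hsP, hsn, hsn2, hγsym, hPsym, hinv⟩ := hdata
  have hdANY : ∀ f : Sc m, ContDiffOn ℝ (⊤ : ℕ∞) f U → ∀ x ∈ U, DifferentiableAt ℝ f x :=
    fun f hf x hx => (hf.contDiffAt (hU.mem_nhds hx)).differentiableAt (by simp)
  have hdgs : ∀ x ∈ U, ∀ a b c : Fin m,
      pd a (fun y => γ y b c) x = pd a (fun y => γ y c b) x := by
    intro x hx a b c
    exact S2.pd_congr hU hx (fun y hy => hγsym y hy b c) a
  have hD4 : ∀ x ∈ U, ∀ a c : Fin m,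
      (∑ b, (pd a (fun y => γ y c b) x * n x b + γ x c b * pd a (fun y => n y b) x))
        + pd a n2 x * ℓ x c + n2 x * pd a (fun y => ℓ y c) x = 0 := by
    intro x hx a c
    have hdγ : ∀ p q : Fin m, DifferentiableAt ℝ (fun y => γ y p q) x :=
      fun p q => hdANY _ (hsγ p q) x hx
    have hdn : ∀ p : Fin m, DifferentiableAt ℝ (fun y => n y p) x :=
      fun p => hdANY _ (hsn p) x hx
    have hdℓ : ∀ p : Fin m, DifferentiableAt ℝ (fun y => ℓ y p) x :=
      fun p => hdANY _ (hsℓ p) x hx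
    have hdn2 : DifferentiableAt ℝ n2 x := hdANY _ hsn2 x hx
    have hdG : DifferentiableAt ℝ (fun y => ∑ b, γ y c b * n y b) x :=
      DifferentiableAt.fun_sum fun b _ => (hdγ c b).mul (hdn b)
    have hdH : DifferentiableAt ℝ (fun y => n2 y * ℓ y c) x := hdn2.mul (hdℓ c)
    have hzero : pd a (fun y => (∑ b, γ y c b * n y b) + n2 y * ℓ y c) x = 0 := by
      rw [S2.pd_congr hU hx (g := fun _ => (0:ℝ))
        (fun y hy => (hinv y hy).2.2.2 c) a, S2.pd_zero]
    have hsplit : pd a (fun y => (∑ b, γ y c b * n y b) + n2 y * ℓ y c) x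
        = pd a (fun y => ∑ b, γ y c b * n y b) x + pd a (fun y => n2 y * ℓ y c) x :=
      S2.pd_add a hdG hdH
    have hG : pd a (fun y => ∑ b, γ y c b * n y b) x
        = ∑ b, (pd a (fun y => γ y c b) x * n x b + γ x c b * pd a (fun y => n y b) x) := by
      rw [S2.pd_sum a (fun b => fun y => γ y c b * n y b)
        (fun b _ => (hdγ c b).mul (hdn b))]
      exact Finset.sum_congr rfl fun b _ => by
        rw [S2.pd_mul a (hdγ c b) (hdn b)]; ring
    have hH : pd a (fun y => n2 y * ℓ y c) x
        = pd a n2 x * ℓ x c + n2 x * pd a (fun y => ℓ y c) x := by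
      rw [S2.pd_mul a hdn2 (hdℓ c)]; ring
    linarith [hzero, hsplit, hG, hH]
  constructor
  · intro Y hYsm hYs
    refine ⟨?_, ?_, ?_, ?_, ?_, ?_⟩
    · intro x hx c a b
      exact S2.aGB_symm (P x) (Y x) (n x)
        (fun p q r => pd p (fun y => γ y q r) x) (fun p q => pd p (fun y => ℓ y q) x)
        (hdgs x hx) (hYs x hx) c a b
    · intro x hx a b
      exact S2.aK_symm (γ x) (Y x) (ℓ x) (n x) (n2 x)
        (fun p q r => pd p (fun y => γ y q r) x) (fun p q => pd p (fun y => n y q) x)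
        (fun p => pd p n2 x)
        (hγsym x hx) (hdgs x hx) (hYs x hx) a b
    · intro x hx a b c
      exact S2.direct_eq1 (γ x) (P x) (Y x) (ℓ x) (n x) (n2 x)
        (fun p q r => pd p (fun y => γ y q r) x) (fun p q => pd p (fun y => ℓ y q) x)
        (fun p q => pd p (fun y => n y q) x) (fun p => pd p n2 x)
        (hγsym x hx) (hPsym x hx) (hinv x hx).1 (hinv x hx).2.2.2
        (hdgs x hx) (hD4 x hx) a b c
    · intro x hx a b
      exact S2.direct_eq2 (γ x) (P x) (Y x) (ℓ x) (n x) (ℓ2 x) (n2 x)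
        (fun p q r => pd p (fun y => γ y q r) x) (fun p q => pd p (fun y => ℓ y q) x)
        (fun p q => pd p (fun y => n y q) x) (fun p => pd p n2 x) (fun p => pd p ℓ2 x)
        (hγsym x hx) (hPsym x hx) (hinv x hx).1 (hinv x hx).2.1 (hinv x hx).2.2.1
        (hinv x hx).2.2.2 (hD4 x hx) a b
    · intro x hx a
      exact S2.direct_eq3 (P x) (Y x) (ℓ x) (n x) (ℓ2 x) (n2 x)
        (fun p q => pd p (fun y => ℓ y q) x) (fun p => pd p ℓ2 x)
        (hPsym x hx) (hinv x hx).2.1 (hinv x hx).2.2.1 a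
    · intro x hx a b
      exact S2.direct_Yrec (γ x) (P x) (Y x) (ℓ x) (n x) (ℓ2 x) (n2 x)
        (fun p q r => pd p (fun y => γ y q r) x) (fun p q => pd p (fun y => ℓ y q) x)
        (fun p q => pd p (fun y => n y q) x) (fun p => pd p n2 x)
        (hγsym x hx) (hPsym x hx) (hinv x hx).2.1 (hinv x hx).2.2.1
        (hdgs x hx) (hD4 x hx) (hYs x hx) a b
  · intro Γ K φ Ψ hΓs hKs he1 he2 he3
    refine ⟨fun x a b => (covD1 Γ ℓ x a b + covD1 Γ ℓ x b a) / 2 + ℓ2 x * K x a b,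
      ?_, ?_, ?_, ?_, ?_, ?_⟩
    · intro x hx a b
      linear_combination (ℓ2 x) * hKs x hx a b
    · intro x hx a b
      rfl
    · intro x hx c a b
      exact S2.conv_Gam (γ x) (P x)
        (fun a b => (covD1 Γ ℓ x a b + covD1 Γ ℓ x b a) / 2 + ℓ2 x * K x a b)
        (K x) (ℓ x) (n x) (ℓ2 x) (Γ x)
        (fun p q r => pd p (fun y => γ y q r) x) (fun p q => pd p (fun y => ℓ y q) x)
        (hγsym x hx) (hPsym x hx) (hinv x hx).1 (hinv x hx).2.1
        (hΓs x hx) (hKs x hx) (he1 x hx) (fun a b => rfl) c a b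
    · intro x hx a b
      exact S2.conv_K (γ x)
        (fun a b => (covD1 Γ ℓ x a b + covD1 Γ ℓ x b a) / 2 + ℓ2 x * K x a b)
        (K x) (ℓ x) (n x) (ℓ2 x) (n2 x) (Γ x)
        (fun p q r => pd p (fun y => γ y q r) x) (fun p q => pd p (fun y => ℓ y q) x)
        (fun p q => pd p (fun y => n y q) x) (fun p => pd p n2 x)
        (hγsym x hx) (hinv x hx).2.2.1 (hinv x hx).2.2.2
        (hΓs x hx) (hKs x hx) (he1 x hx) (hD4 x hx) (fun a b => rfl) a b
    · intro x hx a
      exact S2.conv_phi (γ x)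
        (fun a b => (covD1 Γ ℓ x a b + covD1 Γ ℓ x b a) / 2 + ℓ2 x * K x a b)
        (K x) (Ψ x) (ℓ x) (n x) (φ x) (ℓ2 x) (n2 x) (Γ x)
        (fun p q => pd p (fun y => ℓ y q) x) (fun p => pd p ℓ2 x)
        (hγsym x hx) (hinv x hx).2.2.1 (hinv x hx).2.2.2
        (hΓs x hx) (he2 x hx) (he3 x hx) (fun a b => rfl) a
    · intro x hx b a
      exact S2.conv_Psi (γ x) (P x)
        (fun a b => (covD1 Γ ℓ x a b + covD1 Γ ℓ x b a) / 2 + ℓ2 x * K x a b)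
        (K x) (Ψ x) (ℓ x) (n x) (φ x) (ℓ2 x) (Γ x)
        (fun p q => pd p (fun y => ℓ y q) x) (fun p => pd p ℓ2 x)
        (hPsym x hx) (hinv x hx).1 (hinv x hx).2.1
        (hΓs x hx) (he2 x hx) (he3 x hx) (fun a b => rfl) b a
end
end

section
/- Let (γ, ℓ, ℓ⁽²⁾) be coordinate hypersurface metric data on U with inverse blocks (P, n, n⁽²⁾), let Y = (Y_{ab}) be a smooth symmetric field, and define K_{ab} := n⁽²⁾Y_{ab} + ½(n^c∂_cγ_{ab} + γ_{cb}∂_an^c + γ_{ac}∂_bn^c) + ½(ℓ_a∂_bn⁽²⁾ + ℓ_b∂_an⁽²⁾). Then n^b K_{ab} = n⁽²⁾ n^b (Y_{ab} + F_{ab}) + ½(∂_a n⁽²⁾ + (n⁽²⁾)² ∂_a ℓ⁽²⁾). -/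
open scoped BigOperators

noncomputable section

namespace HypData

section Helpers

variable {m : ℕ} {x : Fin m → ℝ}

theorem pd_fun_eq {f g : Sc m} (h : f =ᶠ[nhds x] g) (a : Fin m) :
    pd a f x = pd a g x := by
  unfold pd; rw [h.fderiv_eq]

theorem pd_const (c : ℝ) (a : Fin m) : pd a (fun _ => c) x = 0 := by
  simp [pd]

theorem pd_add {f g : Sc m} (hf : DifferentiableAt ℝ f x) (hg : DifferentiableAt ℝ g x)
    (a : Fin m) : pd a (fun y => f y + g y) x = pd a f x + pd a g x := by
  simp [pd, fderiv_fun_add hf hg]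

theorem pd_mul {f g : Sc m} (hf : DifferentiableAt ℝ f x) (hg : DifferentiableAt ℝ g x)
    (a : Fin m) : pd a (fun y => f y * g y) x = pd a f x * g x + f x * pd a g x := by
  simp [pd, fderiv_fun_mul hf hg]; ring

theorem pd_sum {f : Fin m → Sc m} (hf : ∀ i, DifferentiableAt ℝ (f i) x) (a : Fin m) :
    pd a (fun y => ∑ i, f i y) x = ∑ i, pd a (f i) x := by
  unfold pd; rw [fderiv_fun_sum fun i _ => hf i]; simp

end Helpers

end HypData

open HypData in
/-- Corollary 1 of the paper, the contraction `n^bK_{ab}`. -/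
theorem statement3 (m : ℕ) (hm : 1 ≤ m) (U : Set (Fin m → ℝ)) (hU : IsOpen U)
    (γ : Ten m) (ℓ : Vec m) (ℓ2 : Sc m) (P : Ten m) (n : Vec m) (n2 : Sc m)
    (hdata : MetricData U γ ℓ ℓ2 P n n2)
    (Y : Ten m) (hYsm : SmTen U Y) (hYs : ∀ x ∈ U, ∀ a b, Y x a b = Y x b a) :
    ∀ x ∈ U, ∀ a,
      (∑ b, n x b * Kf γ ℓ n n2 Y x a b)
        = n2 x * (∑ b, n x b * (Y x a b + Ff ℓ x a b))
          + (pd a n2 x + n2 x ^ 2 * pd a ℓ2 x) / 2 := by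
  obtain ⟨hγ, hℓ, hℓ2, hP, hn, hn2, hγs, hPs, hinv⟩ := hdata
  intro x hx a
  have hmem : U ∈ nhds x := hU.mem_nhds hx
  have dγ : ∀ c b, DifferentiableAt ℝ (fun y => γ y c b) x := fun c b =>
    ((hγ c b).contDiffAt hmem).differentiableAt (by norm_num)
  have dℓ : ∀ c, DifferentiableAt ℝ (fun y => ℓ y c) x := fun c =>
    ((hℓ c).contDiffAt hmem).differentiableAt (by norm_num)
  have dn : ∀ c, DifferentiableAt ℝ (fun y => n y c) x := fun c =>
    ((hn c).contDiffAt hmem).differentiableAt (by norm_num)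
  have dn2 : DifferentiableAt ℝ n2 x := (hn2.contDiffAt hmem).differentiableAt (by norm_num)
  have dℓ2 : DifferentiableAt ℝ ℓ2 x := (hℓ2.contDiffAt hmem).differentiableAt (by norm_num)
  -- derivative of identity (4)
  have h1 : ∀ c e, (∑ b, (pd e (fun y => γ y c b) x * n x b + γ x c b * pd e (fun y => n y b) x))
      + (pd e n2 x * ℓ x c + n2 x * pd e (fun y => ℓ y c) x) = 0 := by
    intro c e
    have hz : (fun y => (∑ b, γ y c b * n y b) + n2 y * ℓ y c) =ᶠ[nhds x] fun _ => (0:ℝ) :=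
      Filter.eventuallyEq_of_mem hmem fun y hy => (hinv y hy).2.2.2 c
    have h0 : pd e (fun y => (∑ b, γ y c b * n y b) + n2 y * ℓ y c) x = 0 := by
      rw [pd_fun_eq hz, pd_const]
    rw [pd_add (DifferentiableAt.fun_sum fun b _ => (dγ c b).fun_mul (dn b)) (dn2.fun_mul (dℓ c)),
      pd_sum (fun b => (dγ c b).fun_mul (dn b)), pd_mul dn2 (dℓ c)] at h0
    rw [← h0]
    exact congrArg₂ (· + ·) (Finset.sum_congr rfl fun b _ => (pd_mul (dγ c b) (dn b) e).symm) rfl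
  -- derivative of identity (3)
  have h2 : ∀ e, (∑ b, (pd e (fun y => n y b) x * ℓ x b + n x b * pd e (fun y => ℓ y b) x))
      + (pd e n2 x * ℓ2 x + n2 x * pd e ℓ2 x) = 0 := by
    intro e
    have hz : (fun y => (∑ b, n y b * ℓ y b) + n2 y * ℓ2 y) =ᶠ[nhds x] fun _ => (1:ℝ) :=
      Filter.eventuallyEq_of_mem hmem fun y hy => (hinv y hy).2.2.1
    have h0 : pd e (fun y => (∑ b, n y b * ℓ y b) + n2 y * ℓ2 y) x = 0 := by
      rw [pd_fun_eq hz, pd_const]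
    rw [pd_add (DifferentiableAt.fun_sum fun b _ => (dn b).fun_mul (dℓ b)) (dn2.fun_mul dℓ2),
      pd_sum (fun b => (dn b).fun_mul (dℓ b)), pd_mul dn2 dℓ2] at h0
    rw [← h0]
    exact congrArg₂ (· + ·) (Finset.sum_congr rfl fun b _ => (pd_mul (dn b) (dℓ b) e).symm) rfl
  have h3 : ∀ c, (∑ b, γ x c b * n x b) = -(n2 x * ℓ x c) := fun c => by
    have := (hinv x hx).2.2.2 c; linarith
  have h4 : (∑ b, n x b * ℓ x b) = 1 - n2 x * ℓ2 x := by
    have := (hinv x hx).2.2.1; linarith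
  -- atom facts
  have F1 : (∑ b, n x b * ∑ c, n x c * pd c (fun y => γ y a b) x)
      + (∑ b, n x b * ∑ c, γ x a c * pd b (fun y => n y c) x)
      + ℓ x a * (∑ b, n x b * pd b n2 x)
      + n2 x * (∑ b, n x b * pd b (fun y => ℓ y a) x) = 0 := by
    have S : ∑ c, n x c * ((∑ b, (pd c (fun y => γ y a b) x * n x b
          + γ x a b * pd c (fun y => n y b) x))
        + (pd c n2 x * ℓ x a + n2 x * pd c (fun y => ℓ y a) x)) = 0 :=
      Finset.sum_eq_zero fun c _ => by rw [h1 a c, mul_zero]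
    have hswap : (∑ b, n x b * ∑ c, n x c * pd c (fun y => γ y a b) x)
        = ∑ c, ∑ b, n x c * (pd c (fun y => γ y a b) x * n x b) := by
      simp only [Finset.mul_sum]
      rw [Finset.sum_comm]
      exact Finset.sum_congr rfl fun c _ => Finset.sum_congr rfl fun b _ => by ring
    have S' : ((∑ c, ∑ b, n x c * (pd c (fun y => γ y a b) x * n x b))
          + (∑ c, ∑ b, n x c * (γ x a b * pd c (fun y => n y b) x)))
        + ((∑ c, n x c * (pd c n2 x * ℓ x a)) + (∑ c, n x c * (n2 x * pd c (fun y => ℓ y a) x)))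
        = 0 := by
      rw [← S]
      rw [show (∑ c, n x c * ((∑ b, (pd c (fun y => γ y a b) x * n x b
              + γ x a b * pd c (fun y => n y b) x))
            + (pd c n2 x * ℓ x a + n2 x * pd c (fun y => ℓ y a) x)))
          = ∑ c, (((∑ b, n x c * (pd c (fun y => γ y a b) x * n x b))
              + (∑ b, n x c * (γ x a b * pd c (fun y => n y b) x)))
            + ((n x c * (pd c n2 x * ℓ x a)) + (n x c * (n2 x * pd c (fun y => ℓ y a) x))))
        from Finset.sum_congr rfl fun c _ => by
          rw [Finset.sum_add_distrib]
          simp only [mul_add, Finset.mul_sum]]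
      rw [Finset.sum_add_distrib, Finset.sum_add_distrib, Finset.sum_add_distrib]
    have e3 : (∑ b, n x b * ∑ c, γ x a c * pd b (fun y => n y c) x)
        = ∑ c, ∑ b, n x c * (γ x a b * pd c (fun y => n y b) x) := by
      simp only [Finset.mul_sum]
    have e4 : ℓ x a * (∑ b, n x b * pd b n2 x) = ∑ c, n x c * (pd c n2 x * ℓ x a) := by
      rw [Finset.mul_sum]
      exact Finset.sum_congr rfl fun b _ => by ring
    have e5 : n2 x * (∑ b, n x b * pd b (fun y => ℓ y a) x)
        = ∑ c, n x c * (n2 x * pd c (fun y => ℓ y a) x) := by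
      rw [Finset.mul_sum]
      exact Finset.sum_congr rfl fun b _ => by ring
    rw [hswap, e3, e4, e5]
    linear_combination S'
  have F2 : (∑ b, n x b * ∑ c, γ x c b * pd a (fun y => n y c) x)
      = n2 x * (∑ b, n x b * pd a (fun y => ℓ y b) x)
        + n2 x * ℓ2 x * pd a n2 x + n2 x ^ 2 * pd a ℓ2 x := by
    have T : (∑ b, n x b * ∑ c, γ x c b * pd a (fun y => n y c) x)
        = -(n2 x * ∑ c, ℓ x c * pd a (fun y => n y c) x) := by
      calc ∑ b, n x b * ∑ c, γ x c b * pd a (fun y => n y c) x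
          = ∑ c, (∑ b, γ x c b * n x b) * pd a (fun y => n y c) x := by
            simp only [Finset.mul_sum]
            rw [Finset.sum_comm]
            exact Finset.sum_congr rfl fun c _ => by
              rw [Finset.sum_mul]
              exact Finset.sum_congr rfl fun b _ => by ring
        _ = ∑ c, (-(n2 x * ℓ x c)) * pd a (fun y => n y c) x :=
            Finset.sum_congr rfl fun c _ => by rw [h3 c]
        _ = -(n2 x * ∑ c, ℓ x c * pd a (fun y => n y c) x) := by
            rw [Finset.mul_sum, ← Finset.sum_neg_distrib]
            exact Finset.sum_congr rfl fun c _ => by ring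
    rw [T]
    have Hsplit : (∑ b, pd a (fun y => n y b) x * ℓ x b)
        + (∑ b, n x b * pd a (fun y => ℓ y b) x)
        + (pd a n2 x * ℓ2 x + n2 x * pd a ℓ2 x) = 0 := by
      rw [← Finset.sum_add_distrib]
      exact h2 a
    have Hcomm : (∑ b, ℓ x b * pd a (fun y => n y b) x)
        = ∑ b, pd a (fun y => n y b) x * ℓ x b :=
      Finset.sum_congr rfl fun b _ => mul_comm _ _
    linear_combination (-(n2 x)) * Hcomm + (-(n2 x)) * Hsplit
  -- expand the goal
  have expand_lhs : (∑ b, n x b * Kf γ ℓ n n2 Y x a b)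
      = n2 x * (∑ b, n x b * Y x a b)
        + ((∑ b, n x b * ∑ c, n x c * pd c (fun y => γ y a b) x)
          + (∑ b, n x b * ∑ c, γ x c b * pd a (fun y => n y c) x)
          + (∑ b, n x b * ∑ c, γ x a c * pd b (fun y => n y c) x)
          + ℓ x a * (∑ b, n x b * pd b n2 x)
          + (∑ b, n x b * ℓ x b) * pd a n2 x) / 2 := by
    simp only [Kf, Uf]
    rw [show (∑ b, n x b * (n2 x * Y x a b
          + ((∑ c, (n x c * pd c (fun y => γ y a b) x + γ x c b * pd a (fun y => n y c) x
              + γ x a c * pd b (fun y => n y c) x))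
            + ℓ x a * pd b n2 x + ℓ x b * pd a n2 x) / 2))
        = ∑ b, (n2 x * (n x b * Y x a b)
          + ((n x b * ∑ c, n x c * pd c (fun y => γ y a b) x)
            + (n x b * ∑ c, γ x c b * pd a (fun y => n y c) x)
            + (n x b * ∑ c, γ x a c * pd b (fun y => n y c) x)
            + ℓ x a * (n x b * pd b n2 x)
            + (n x b * ℓ x b) * pd a n2 x) / 2)
      from Finset.sum_congr rfl fun b _ => by
        rw [Finset.sum_add_distrib, Finset.sum_add_distrib]; ring]
    rw [Finset.sum_add_distrib, ← Finset.mul_sum, ← Finset.sum_div,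
      Finset.sum_add_distrib, Finset.sum_add_distrib, Finset.sum_add_distrib,
      Finset.sum_add_distrib, ← Finset.mul_sum, ← Finset.sum_mul]
  have expand_rhs : (∑ b, n x b * (Y x a b + Ff ℓ x a b))
      = (∑ b, n x b * Y x a b)
        + ((∑ b, n x b * pd a (fun y => ℓ y b) x)
          - (∑ b, n x b * pd b (fun y => ℓ y a) x)) / 2 := by
    simp only [Ff]
    rw [show (∑ b, n x b * (Y x a b
          + (pd a (fun y => ℓ y b) x - pd b (fun y => ℓ y a) x) / 2))
        = ∑ b, ((n x b * Y x a b)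
          + ((n x b * pd a (fun y => ℓ y b) x) - (n x b * pd b (fun y => ℓ y a) x)) / 2)
      from Finset.sum_congr rfl fun b _ => by ring]
    rw [Finset.sum_add_distrib, ← Finset.sum_div, Finset.sum_sub_distrib]
  rw [expand_lhs, expand_rhs]
  linear_combination (F1 + F2 + pd a n2 x * h4) / 2
end
end

section
/- Let W be an (m+1)-dimensional real vector space with a nondegenerate symmetric bilinear form g (in the paper g is Lorentzian; only nondegeneracy is used), and let R : W×W×W×W → ℝ be a quadrilinear map with the symmetries R(X,Y,Z,T) = −R(Y,X,Z,T) = −R(X,Y,T,Z) and R(X,Y,Z,T) = R(Z,T,X,Y). Let e_1,…,e_m, ℓ be a basis of W, set γ_{ab} := g(e_a,e_b), ℓ_a := g(ℓ,e_a), ℓ⁽²⁾ := g(ℓ,ℓ), let (P^{ab}, n^a, n⁽²⁾) be the inverse blocks of the Gram matrix 𝔸 = [[γ, ℓ],[ℓᵀ, ℓ⁽²⁾]], and let ν ∈ W be the unique vector with g(ν, e_a) = 0 for all a and g(ν, ℓ) = 1. Then the Einstein bilinear form Ein of (g, R) satisfies: (1) Ein(ν, ℓ) = −R(ℓ, e_b,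 e_c, e_d) n^c P^{bd} − ½ R(e_a, e_b, e_c, e_d) P^{ac} P^{bd}; (2) Ein(ν, e_c) = R(ℓ, e_b, e_c, e_d)(n⁽²⁾P^{bd} − n^b n^d) + R(e_a, e_b, e_c, e_d) n^a P^{bd} (summation over repeated indices, all ranging over {1,…,m}). -/
open scoped BigOperators

noncomputable section

namespace Statement10

open HypData

variable {m : ℕ} {W : Type*} [AddCommGroup W] [Module ℝ W]

/-- Inverse Gram matrix, in block form `[[P,n],[nᵀ,n⁽²⁾]]`. -/
def Ginv (P : Fin m → Fin m → ℝ) (n : Fin m → ℝ) (n2 : ℝ) :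
    Fin m ⊕ Unit → Fin m ⊕ Unit → ℝ
  | Sum.inl a, Sum.inl b => P a b
  | Sum.inl a, Sum.inr _ => n a
  | Sum.inr _, Sum.inl b => n b
  | Sum.inr _, Sum.inr _ => n2

/-- Ricci bilinear form of `(g,R)`, computed with the basis `b` whose inverse Gram
matrix has blocks `(P,n,n2)`. -/
def Ric (b : Module.Basis (Fin m ⊕ Unit) ℝ W)
    (R : W →ₗ[ℝ] W →ₗ[ℝ] W →ₗ[ℝ] W →ₗ[ℝ] ℝ)
    (P : Fin m → Fin m → ℝ) (n : Fin m → ℝ) (n2 : ℝ) (X Z : W) : ℝ :=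
  ∑ i, ∑ j, Ginv P n n2 i j * R (b i) X (b j) Z

/-- Scalar curvature. -/
def Scal (b : Module.Basis (Fin m ⊕ Unit) ℝ W)
    (R : W →ₗ[ℝ] W →ₗ[ℝ] W →ₗ[ℝ] W →ₗ[ℝ] ℝ)
    (P : Fin m → Fin m → ℝ) (n : Fin m → ℝ) (n2 : ℝ) : ℝ :=
  ∑ i, ∑ j, Ginv P n n2 i j * Ric b R P n n2 (b i) (b j)

/-- Einstein bilinear form `Ein = Ric − ½ Scal g`. -/
def Ein (g : LinearMap.BilinForm ℝ W) (b : Module.Basis (Fin m ⊕ Unit) ℝ W)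
    (R : W →ₗ[ℝ] W →ₗ[ℝ] W →ₗ[ℝ] W →ₗ[ℝ] ℝ)
    (P : Fin m → Fin m → ℝ) (n : Fin m → ℝ) (n2 : ℝ) (X Z : W) : ℝ :=
  Ric b R P n n2 X Z - Scal b R P n n2 / 2 * g X Z


private lemma sum_antisym {κ : ℕ} (F : Fin κ → Fin κ → ℝ) (h : ∀ a b, F a b = -F b a) :
    ∑ a, ∑ b, F a b = 0 := by
  have h1 : ∑ a, ∑ b, F a b = ∑ b, ∑ a, F a b := Finset.sum_comm
  have h2 : ∑ b : Fin κ, ∑ a, F a b = -∑ b : Fin κ, ∑ a, F b a := by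
    rw [← Finset.sum_neg_distrib]
    exact Finset.sum_congr rfl fun b _ => by
      rw [← Finset.sum_neg_distrib]
      exact Finset.sum_congr rfl fun a _ => h a b
  linarith

private lemma neg2 {κ : ℕ} (f : Fin κ → Fin κ → ℝ) :
    (∑ a : Fin κ, ∑ b : Fin κ, -(f a b)) = -∑ a : Fin κ, ∑ b : Fin κ, f a b := by
  simp

set_option maxHeartbeats 1600000 in
/-- Proposition 4 of the paper, the normal-transversal and
normal-tangential components of the Einstein tensor in terms of the Riemann
tensor and the inverse-Gram blocks `(P,n,n⁽²⁾)`. -/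
theorem statement10 (m : ℕ) (hm : 1 ≤ m)
    (W : Type*) [AddCommGroup W] [Module ℝ W]
    (g : LinearMap.BilinForm ℝ W)
    (hsymm : ∀ v w : W, g v w = g w v)
    (hnd : ∀ v : W, (∀ w : W, g v w = 0) → v = 0)
    (R : W →ₗ[ℝ] W →ₗ[ℝ] W →ₗ[ℝ] W →ₗ[ℝ] ℝ)
    (hR1 : ∀ X Z T S : W, R X Z T S = -R Z X T S)
    (hR2 : ∀ X Z T S : W, R X Z T S = -R X Z S T)
    (hR3 : ∀ X Z T S : W, R X Z T S = R T S X Z)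
    (b : Module.Basis (Fin m ⊕ Unit) ℝ W)
    (P : Fin m → Fin m → ℝ) (n : Fin m → ℝ) (n2 : ℝ)
    (hinv : InvBlocks (fun a c => g (b (Sum.inl a)) (b (Sum.inl c)))
      (fun a => g (b (Sum.inr ())) (b (Sum.inl a)))
      (g (b (Sum.inr ())) (b (Sum.inr ()))) P n n2)
    (ν : W) (hν0 : ∀ a : Fin m, g ν (b (Sum.inl a)) = 0)
    (hν1 : g ν (b (Sum.inr ())) = 1) :
    -- (1)
    (Ein g b R P n n2 ν (b (Sum.inr ()))
      = -(∑ b', ∑ c, ∑ d,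
          R (b (Sum.inr ())) (b (Sum.inl b')) (b (Sum.inl c)) (b (Sum.inl d))
            * n c * P b' d)
        - (∑ a, ∑ b', ∑ c, ∑ d,
          R (b (Sum.inl a)) (b (Sum.inl b')) (b (Sum.inl c)) (b (Sum.inl d))
            * P a c * P b' d) / 2)
    -- (2)
    ∧ (∀ c : Fin m,
      Ein g b R P n n2 ν (b (Sum.inl c))
        = (∑ b', ∑ d,
            R (b (Sum.inr ())) (b (Sum.inl b')) (b (Sum.inl c)) (b (Sum.inl d))
              * (n2 * P b' d - n b' * n d))
          + (∑ a, ∑ b', ∑ d,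
            R (b (Sum.inl a)) (b (Sum.inl b')) (b (Sum.inl c)) (b (Sum.inl d))
              * n a * P b' d)) := by

  classical
  obtain ⟨hi1, hi2, hi3, hi4⟩ := hinv
  beta_reduce at hi1 hi2 hi3 hi4
  set A : Matrix (Fin m ⊕ Unit) (Fin m ⊕ Unit) ℝ := Matrix.of fun i j => g (b i) (b j) with hA
  set B : Matrix (Fin m ⊕ Unit) (Fin m ⊕ Unit) ℝ := Matrix.of fun i j => Ginv P n n2 i j with hB
  have hBA : B * A = 1 := by
    ext i j
    rcases i with a | u <;> rcases j with c | u'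
    · simpa [hA, hB, Matrix.mul_apply, Fintype.sum_sum_type, Matrix.one_apply, Ginv, kd]
        using hi1 a c
    · simpa [hA, hB, Matrix.mul_apply, Fintype.sum_sum_type, Matrix.one_apply, Ginv, kd,
        hsymm (b (Sum.inl _)) (b (Sum.inr ())), mul_comm] using hi2 a
    · simpa [hA, hB, Matrix.mul_apply, Fintype.sum_sum_type, Matrix.one_apply, Ginv, kd,
        hsymm, mul_comm] using hi4 c
    · simpa [hA, hB, Matrix.mul_apply, Fintype.sum_sum_type, Matrix.one_apply, Ginv, kd,
        hsymm, mul_comm] using hi3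
  have hAB : A * B = 1 := mul_eq_one_comm.mpr hBA
  have hAsym : Matrix.transpose A = A := by
    ext i j; simp [hA, Matrix.transpose_apply, hsymm (b j) (b i)]
  have hBtA : Matrix.transpose B * A = 1 := by
    rw [← hAsym, ← Matrix.transpose_mul, hAB, Matrix.transpose_one]
  have hBsym : Matrix.transpose B = B := by
    calc Matrix.transpose B = Matrix.transpose B * (A * B) := by rw [hAB, mul_one]
    _ = (Matrix.transpose B * A) * B := by rw [mul_assoc]
    _ = B := by rw [hBtA, one_mul]
  have Psymm : ∀ a c, P a c = P c a := by
    intro a c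
    have := congrFun (congrFun hBsym (Sum.inl a)) (Sum.inl c)
    simpa [hB, Matrix.transpose_apply, Ginv] using this.symm
  have hnu : ν = (∑ a, n a • b (Sum.inl a)) + n2 • b (Sum.inr ()) := by
    have key : ∀ i, g (ν - ((∑ a, n a • b (Sum.inl a)) + n2 • b (Sum.inr ()))) (b i) = 0 := by
      intro i
      rcases i with c | ⟨⟩
      · have h4 := hi4 c
        simp only [map_sub, map_add, map_sum, map_smul, LinearMap.sub_apply, LinearMap.add_apply,
          LinearMap.sum_apply, LinearMap.smul_apply, smul_eq_mul, hν0]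
        have : ∀ a, n a * g (b (Sum.inl a)) (b (Sum.inl c))
            = g (b (Sum.inl c)) (b (Sum.inl a)) * n a := fun a => by rw [hsymm]; ring
        rw [Finset.sum_congr rfl fun a _ => this a]
        linarith [h4]
      · simp only [map_sub, map_add, map_sum, map_smul, LinearMap.sub_apply, LinearMap.add_apply,
          LinearMap.sum_apply, LinearMap.smul_apply, smul_eq_mul, hν1]
        have : ∀ a, n a * g (b (Sum.inl a)) (b (Sum.inr ()))
            = n a * g (b (Sum.inr ())) (b (Sum.inl a)) := fun a => by rw [hsymm]
        rw [Finset.sum_congr rfl fun a _ => this a]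
        linarith [hi3]
    have hz : g (ν - ((∑ a, n a • b (Sum.inl a)) + n2 • b (Sum.inr ()))) = 0 := b.ext key
    exact (sub_eq_zero.mp (hnd _ (fun w => by rw [hz]; rfl)))
  have hz0 : ∀ x y : W, R (b (Sum.inr ())) (b (Sum.inr ())) x y = 0 := fun x y => by
    have := hR1 (b (Sum.inr ())) (b (Sum.inr ())) x y; linarith
  have hz1 : ∀ x y : W, R x y (b (Sum.inr ())) (b (Sum.inr ())) = 0 := fun x y => by
    have := hR2 x y (b (Sum.inr ())) (b (Sum.inr ())); linarith

  have ricE : ∀ X Z : W, Ric b R P n n2 X Z =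
      (∑ k, ∑ l, P k l * R (b (Sum.inl k)) X (b (Sum.inl l)) Z)
      + (∑ k, n k * R (b (Sum.inl k)) X (b (Sum.inr ())) Z)
      + (∑ l, n l * R (b (Sum.inr ())) X (b (Sum.inl l)) Z)
      + n2 * R (b (Sum.inr ())) X (b (Sum.inr ())) Z := by
    intro X Z
    rw [Ric, Fintype.sum_sum_type]
    simp only [Fintype.sum_sum_type, Ginv, Finset.univ_unique, Finset.sum_singleton,
      Finset.sum_add_distrib]
    ring

  have nuE : ∀ x z w : W, R x ν z w
      = (∑ j, n j * R x (b (Sum.inl j)) z w) + n2 * R x (b (Sum.inr ())) z w := by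
    intro x z w
    rw [hnu]
    simp only [map_add, map_sum, map_smul, LinearMap.add_apply, LinearMap.sum_apply,
      LinearMap.smul_apply, smul_eq_mul]

  have ricNu : ∀ Z : W, Ric b R P n n2 ν Z =
      (∑ k, ∑ l, ∑ j, P k l * (n j * R (b (Sum.inl k)) (b (Sum.inl j)) (b (Sum.inl l)) Z))
      + (∑ k, ∑ l, P k l * (n2 * R (b (Sum.inl k)) (b (Sum.inr ())) (b (Sum.inl l)) Z))
      + (∑ k, ∑ j, n k * (n j * R (b (Sum.inl k)) (b (Sum.inl j)) (b (Sum.inr ())) Z))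
      + (∑ k, n k * (n2 * R (b (Sum.inl k)) (b (Sum.inr ())) (b (Sum.inr ())) Z))
      + (∑ l, ∑ j, n l * (n j * R (b (Sum.inr ())) (b (Sum.inl j)) (b (Sum.inl l)) Z))
      + (∑ l, n l * (n2 * R (b (Sum.inr ())) (b (Sum.inr ())) (b (Sum.inl l)) Z))
      + (∑ j, n2 * (n j * R (b (Sum.inr ())) (b (Sum.inl j)) (b (Sum.inr ())) Z))
      + n2 * (n2 * R (b (Sum.inr ())) (b (Sum.inr ())) (b (Sum.inr ())) Z) := by
    intro Z
    rw [ricE]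
    simp only [nuE]
    simp only [mul_add, Finset.mul_sum, Finset.sum_add_distrib]
    ring


  -- ===== part 1 conversions =====
  have cA1 : (∑ k, ∑ l, ∑ j, P k l * (n j * R (b (Sum.inl k)) (b (Sum.inl j)) (b (Sum.inl l)) (b (Sum.inr ())))) = (∑ p, ∑ q, ∑ r, R (b (Sum.inr ())) (b (Sum.inl p)) (b (Sum.inl q)) (b (Sum.inl r)) * n q * P p r) := by
    rw [Finset.sum_comm]
    refine Finset.sum_congr rfl fun p _ => ?_
    rw [Finset.sum_comm]
    refine Finset.sum_congr rfl fun q _ => Finset.sum_congr rfl fun r _ => ?_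
    rw [hR3 (b (Sum.inl r)) (b (Sum.inl q)) (b (Sum.inl p)) (b (Sum.inr ())), hR2 (b (Sum.inl p)) (b (Sum.inr ())) (b (Sum.inl r)) (b (Sum.inl q)),
      hR1 (b (Sum.inl p)) (b (Sum.inr ())) (b (Sum.inl q)) (b (Sum.inl r)), Psymm r p]
    ring
  have cA2 : (∑ k, ∑ l, P k l * (n2 * R (b (Sum.inl k)) (b (Sum.inr ())) (b (Sum.inl l)) (b (Sum.inr ())))) = n2 * (∑ p, ∑ q, P p q * R (b (Sum.inr ())) (b (Sum.inl p)) (b (Sum.inr ())) (b (Sum.inl q))) := by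
    calc (∑ k, ∑ l, P k l * (n2 * R (b (Sum.inl k)) (b (Sum.inr ())) (b (Sum.inl l)) (b (Sum.inr ()))))
        = ∑ p, ∑ q, n2 * (P p q * R (b (Sum.inr ())) (b (Sum.inl p)) (b (Sum.inr ())) (b (Sum.inl q))) :=
        Finset.sum_congr rfl fun p _ => Finset.sum_congr rfl fun q _ => by
          rw [hR1 (b (Sum.inl p)) (b (Sum.inr ())) (b (Sum.inl q)) (b (Sum.inr ())), hR2 (b (Sum.inr ())) (b (Sum.inl p)) (b (Sum.inl q)) (b (Sum.inr ()))]; ring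
      _ = n2 * (∑ p, ∑ q, P p q * R (b (Sum.inr ())) (b (Sum.inl p)) (b (Sum.inr ())) (b (Sum.inl q))) := by simp only [Finset.mul_sum]
  have cA3 : ∀ Z : W, (∑ k, ∑ j, n k * (n j * R (b (Sum.inl k)) (b (Sum.inl j)) (b (Sum.inr ())) Z)) = 0 :=
    fun Z => sum_antisym _ (fun p q => by rw [hR1 (b (Sum.inl p)) (b (Sum.inl q)) (b (Sum.inr ())) Z]; ring)
  have cA5 : (∑ l, ∑ j, n l * (n j * R (b (Sum.inr ())) (b (Sum.inl j)) (b (Sum.inl l)) (b (Sum.inr ())))) = -(∑ p, ∑ q, (n p * n q) * R (b (Sum.inr ())) (b (Sum.inl p)) (b (Sum.inr ())) (b (Sum.inl q))) := by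
    calc (∑ l, ∑ j, n l * (n j * R (b (Sum.inr ())) (b (Sum.inl j)) (b (Sum.inl l)) (b (Sum.inr ()))))
        = ∑ j, ∑ l, n l * (n j * R (b (Sum.inr ())) (b (Sum.inl j)) (b (Sum.inl l)) (b (Sum.inr ()))) := Finset.sum_comm
      _ = ∑ p, ∑ q, -((n p * n q) * R (b (Sum.inr ())) (b (Sum.inl p)) (b (Sum.inr ())) (b (Sum.inl q))) :=
        Finset.sum_congr rfl fun p _ => Finset.sum_congr rfl fun q _ => by
          rw [hR2 (b (Sum.inr ())) (b (Sum.inl p)) (b (Sum.inl q)) (b (Sum.inr ()))]; ring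
      _ = -(∑ p, ∑ q, (n p * n q) * R (b (Sum.inr ())) (b (Sum.inl p)) (b (Sum.inr ())) (b (Sum.inl q))) := neg2 _
  have r1 : Ric b R P n n2 ν (b (Sum.inr ())) = (∑ p, ∑ q, ∑ r, R (b (Sum.inr ())) (b (Sum.inl p)) (b (Sum.inl q)) (b (Sum.inl r)) * n q * P p r) + n2 * (∑ p, ∑ q, P p q * R (b (Sum.inr ())) (b (Sum.inl p)) (b (Sum.inr ())) (b (Sum.inl q))) - (∑ p, ∑ q, (n p * n q) * R (b (Sum.inr ())) (b (Sum.inl p)) (b (Sum.inr ())) (b (Sum.inl q))) := by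
    rw [ricNu, cA1, cA2, cA3, cA5]
    simp only [hz0, hz1, mul_zero, zero_mul, Finset.sum_const_zero, add_zero, zero_add]
    ring
  -- ===== Scal blocks =====
  have cQ : (∑ k, ∑ l, ∑ p, ∑ r, P k l * (P p r * R (b (Sum.inl p)) (b (Sum.inl k)) (b (Sum.inl r)) (b (Sum.inl l)))) = (∑ p, ∑ q, ∑ r, ∑ s, R (b (Sum.inl p)) (b (Sum.inl q)) (b (Sum.inl r)) (b (Sum.inl s)) * P p r * P q s) := by
    have s1 : (∑ k, ∑ l, ∑ p, ∑ r, P k l * (P p r * R (b (Sum.inl p)) (b (Sum.inl k)) (b (Sum.inl r)) (b (Sum.inl l))))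
        = ∑ k, ∑ p, ∑ l, ∑ r, P k l * (P p r * R (b (Sum.inl p)) (b (Sum.inl k)) (b (Sum.inl r)) (b (Sum.inl l))) :=
      Finset.sum_congr rfl fun k _ => Finset.sum_comm
    have s2 : (∑ k, ∑ p, ∑ l, ∑ r, P k l * (P p r * R (b (Sum.inl p)) (b (Sum.inl k)) (b (Sum.inl r)) (b (Sum.inl l))))
        = ∑ p, ∑ k, ∑ l, ∑ r, P k l * (P p r * R (b (Sum.inl p)) (b (Sum.inl k)) (b (Sum.inl r)) (b (Sum.inl l))) :=
      Finset.sum_comm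
    have s3 : (∑ p, ∑ k, ∑ l, ∑ r, P k l * (P p r * R (b (Sum.inl p)) (b (Sum.inl k)) (b (Sum.inl r)) (b (Sum.inl l))))
        = ∑ p, ∑ k, ∑ r, ∑ l, P k l * (P p r * R (b (Sum.inl p)) (b (Sum.inl k)) (b (Sum.inl r)) (b (Sum.inl l))) :=
      Finset.sum_congr rfl fun p _ => Finset.sum_congr rfl fun k _ => Finset.sum_comm
    rw [s1, s2, s3]
    exact Finset.sum_congr rfl fun p _ => Finset.sum_congr rfl fun q _ =>
      Finset.sum_congr rfl fun r _ => Finset.sum_congr rfl fun s _ => by ring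
  have cX1 : (∑ k, ∑ l, ∑ p, P k l * (n p * R (b (Sum.inl p)) (b (Sum.inl k)) (b (Sum.inr ())) (b (Sum.inl l)))) = (∑ p, ∑ q, ∑ r, R (b (Sum.inr ())) (b (Sum.inl p)) (b (Sum.inl q)) (b (Sum.inl r)) * n q * P p r) := by
    rw [Finset.sum_comm]
    refine Finset.sum_congr rfl fun p _ => ?_
    rw [Finset.sum_comm]
    refine Finset.sum_congr rfl fun q _ => Finset.sum_congr rfl fun r _ => ?_
    rw [hR3 (b (Sum.inl q)) (b (Sum.inl r)) (b (Sum.inr ())) (b (Sum.inl p)), Psymm r p]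
    ring
  have cX2 : (∑ k, ∑ l, ∑ r, P k l * (n r * R (b (Sum.inr ())) (b (Sum.inl k)) (b (Sum.inl r)) (b (Sum.inl l)))) = (∑ p, ∑ q, ∑ r, R (b (Sum.inr ())) (b (Sum.inl p)) (b (Sum.inl q)) (b (Sum.inl r)) * n q * P p r) := by
    refine Finset.sum_congr rfl fun p _ => ?_
    rw [Finset.sum_comm]
    exact Finset.sum_congr rfl fun q _ => Finset.sum_congr rfl fun r _ => by ring
  have cM : (∑ k, ∑ l, P k l * (n2 * R (b (Sum.inr ())) (b (Sum.inl k)) (b (Sum.inr ())) (b (Sum.inl l)))) = n2 * (∑ p, ∑ q, P p q * R (b (Sum.inr ())) (b (Sum.inl p)) (b (Sum.inr ())) (b (Sum.inl q))) := by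
    calc (∑ k, ∑ l, P k l * (n2 * R (b (Sum.inr ())) (b (Sum.inl k)) (b (Sum.inr ())) (b (Sum.inl l))))
        = ∑ p, ∑ q, n2 * (P p q * R (b (Sum.inr ())) (b (Sum.inl p)) (b (Sum.inr ())) (b (Sum.inl q))) :=
        Finset.sum_congr rfl fun p _ => Finset.sum_congr rfl fun q _ => by ring
      _ = n2 * (∑ p, ∑ q, P p q * R (b (Sum.inr ())) (b (Sum.inl p)) (b (Sum.inr ())) (b (Sum.inl q))) := by simp only [Finset.mul_sum]
  have bEE : (∑ k, ∑ l, P k l * Ric b R P n n2 (b (Sum.inl k)) (b (Sum.inl l))) = (∑ p, ∑ q, ∑ r, ∑ s, R (b (Sum.inl p)) (b (Sum.inl q)) (b (Sum.inl r)) (b (Sum.inl s)) * P p r * P q s) + (∑ p, ∑ q, ∑ r, R (b (Sum.inr ())) (b (Sum.inl p)) (b (Sum.inl q)) (b (Sum.inl r)) * n q * P p r) + (∑ p, ∑ q, ∑ r, R (b (Sum.inr ())) (b (Sum.inl p)) (b (Sum.inl q)) (b (Sum.inl r)) * n q * P p r) + n2 * (∑ p, ∑ q, P p q * R (b (Sum.inr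 ())) (b (Sum.inl p)) (b (Sum.inr ())) (b (Sum.inl q))) := by
    calc (∑ k, ∑ l, P k l * Ric b R P n n2 (b (Sum.inl k)) (b (Sum.inl l)))
        = ∑ k, ∑ l, ((∑ p, ∑ r, P k l * (P p r * R (b (Sum.inl p)) (b (Sum.inl k)) (b (Sum.inl r)) (b (Sum.inl l))))
          + (∑ p, P k l * (n p * R (b (Sum.inl p)) (b (Sum.inl k)) (b (Sum.inr ())) (b (Sum.inl l))))
          + (∑ r, P k l * (n r * R (b (Sum.inr ())) (b (Sum.inl k)) (b (Sum.inl r)) (b (Sum.inl l))))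
          + P k l * (n2 * R (b (Sum.inr ())) (b (Sum.inl k)) (b (Sum.inr ())) (b (Sum.inl l)))) :=
        Finset.sum_congr rfl fun k _ => Finset.sum_congr rfl fun l _ => by
          rw [ricE]; simp only [mul_add, Finset.mul_sum]
      _ = (∑ k, ∑ l, ∑ p, ∑ r, P k l * (P p r * R (b (Sum.inl p)) (b (Sum.inl k)) (b (Sum.inl r)) (b (Sum.inl l))))
          + (∑ k, ∑ l, ∑ p, P k l * (n p * R (b (Sum.inl p)) (b (Sum.inl k)) (b (Sum.inr ())) (b (Sum.inl l))))
          + (∑ k, ∑ l, ∑ r, P k l * (n r * R (b (Sum.inr ())) (b (Sum.inl k)) (b (Sum.inl r)) (b (Sum.inl l))))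
          + (∑ k, ∑ l, P k l * (n2 * R (b (Sum.inr ())) (b (Sum.inl k)) (b (Sum.inr ())) (b (Sum.inl l)))) := by
        simp only [Finset.sum_add_distrib]
      _ = (∑ p, ∑ q, ∑ r, ∑ s, R (b (Sum.inl p)) (b (Sum.inl q)) (b (Sum.inl r)) (b (Sum.inl s)) * P p r * P q s) + (∑ p, ∑ q, ∑ r, R (b (Sum.inr ())) (b (Sum.inl p)) (b (Sum.inl q)) (b (Sum.inl r)) * n q * P p r) + (∑ p, ∑ q, ∑ r, R (b (Sum.inr ())) (b (Sum.inl p)) (b (Sum.inl q)) (b (Sum.inl r)) * n q * P p r) + n2 * (∑ p, ∑ q, P p q * R (b (Sum.inr ())) (b (Sum.inl p)) (b (Sum.inr ())) (b (Sum.inl q))) := by rw [cQ, cX1, cX2, cM]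
  have cEL1 : (∑ k, ∑ p, ∑ r, n k * (P p r * R (b (Sum.inl p)) (b (Sum.inl k)) (b (Sum.inl r)) (b (Sum.inr ())))) = (∑ p, ∑ q, ∑ r, R (b (Sum.inr ())) (b (Sum.inl p)) (b (Sum.inl q)) (b (Sum.inl r)) * n q * P p r) := by
    refine ((Finset.sum_congr rfl fun k _ => Finset.sum_comm).trans ?_)
    rw [Finset.sum_comm]
    refine Finset.sum_congr rfl fun p _ => Finset.sum_congr rfl fun q _ =>
      Finset.sum_congr rfl fun r _ => ?_
    rw [hR3 (b (Sum.inl r)) (b (Sum.inl q)) (b (Sum.inl p)) (b (Sum.inr ())), hR2 (b (Sum.inl p)) (b (Sum.inr ())) (b (Sum.inl r)) (b (Sum.inl q)),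
      hR1 (b (Sum.inl p)) (b (Sum.inr ())) (b (Sum.inl q)) (b (Sum.inl r)), Psymm r p]
    ring
  have cEL3 : (∑ k, ∑ r, n k * (n r * R (b (Sum.inr ())) (b (Sum.inl k)) (b (Sum.inl r)) (b (Sum.inr ())))) = -(∑ p, ∑ q, (n p * n q) * R (b (Sum.inr ())) (b (Sum.inl p)) (b (Sum.inr ())) (b (Sum.inl q))) := by
    calc (∑ k, ∑ r, n k * (n r * R (b (Sum.inr ())) (b (Sum.inl k)) (b (Sum.inl r)) (b (Sum.inr ()))))
        = ∑ p, ∑ q, -((n p * n q) * R (b (Sum.inr ())) (b (Sum.inl p)) (b (Sum.inr ())) (b (Sum.inl q))) :=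
        Finset.sum_congr rfl fun p _ => Finset.sum_congr rfl fun q _ => by
          rw [hR2 (b (Sum.inr ())) (b (Sum.inl p)) (b (Sum.inl q)) (b (Sum.inr ()))]; ring
      _ = -(∑ p, ∑ q, (n p * n q) * R (b (Sum.inr ())) (b (Sum.inl p)) (b (Sum.inr ())) (b (Sum.inl q))) := neg2 _
  have bEL : (∑ k, n k * Ric b R P n n2 (b (Sum.inl k)) (b (Sum.inr ()))) = (∑ p, ∑ q, ∑ r, R (b (Sum.inr ())) (b (Sum.inl p)) (b (Sum.inl q)) (b (Sum.inl r)) * n q * P p r) - (∑ p, ∑ q, (n p * n q) * R (b (Sum.inr ())) (b (Sum.inl p)) (b (Sum.inr ())) (b (Sum.inl q))) := by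
    calc (∑ k, n k * Ric b R P n n2 (b (Sum.inl k)) (b (Sum.inr ())))
        = ∑ k, ((∑ p, ∑ r, n k * (P p r * R (b (Sum.inl p)) (b (Sum.inl k)) (b (Sum.inl r)) (b (Sum.inr ()))))
          + (∑ p, n k * (n p * R (b (Sum.inl p)) (b (Sum.inl k)) (b (Sum.inr ())) (b (Sum.inr ()))))
          + (∑ r, n k * (n r * R (b (Sum.inr ())) (b (Sum.inl k)) (b (Sum.inl r)) (b (Sum.inr ()))))
          + n k * (n2 * R (b (Sum.inr ())) (b (Sum.inl k)) (b (Sum.inr ())) (b (Sum.inr ())))) :=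
        Finset.sum_congr rfl fun k _ => by rw [ricE]; simp only [mul_add, Finset.mul_sum]
      _ = (∑ k, ∑ p, ∑ r, n k * (P p r * R (b (Sum.inl p)) (b (Sum.inl k)) (b (Sum.inl r)) (b (Sum.inr ()))))
          + (∑ k, ∑ p, n k * (n p * R (b (Sum.inl p)) (b (Sum.inl k)) (b (Sum.inr ())) (b (Sum.inr ()))))
          + (∑ k, ∑ r, n k * (n r * R (b (Sum.inr ())) (b (Sum.inl k)) (b (Sum.inl r)) (b (Sum.inr ()))))
          + (∑ k, n k * (n2 * R (b (Sum.inr ())) (b (Sum.inl k)) (b (Sum.inr ())) (b (Sum.inr ())))) := by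
        simp only [Finset.sum_add_distrib]
      _ = (∑ p, ∑ q, ∑ r, R (b (Sum.inr ())) (b (Sum.inl p)) (b (Sum.inl q)) (b (Sum.inl r)) * n q * P p r) - (∑ p, ∑ q, (n p * n q) * R (b (Sum.inr ())) (b (Sum.inl p)) (b (Sum.inr ())) (b (Sum.inl q))) := by
        rw [cEL1, cEL3]
        simp only [hz1, mul_zero, Finset.sum_const_zero, add_zero]
        ring
  have cLE1 : (∑ l, ∑ p, ∑ r, n l * (P p r * R (b (Sum.inl p)) (b (Sum.inr ())) (b (Sum.inl r)) (b (Sum.inl l)))) = (∑ p, ∑ q, ∑ r, R (b (Sum.inr ())) (b (Sum.inl p)) (b (Sum.inl q)) (b (Sum.inl r)) * n q * P p r) := by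
    rw [Finset.sum_comm]
    refine Finset.sum_congr rfl fun p _ => Finset.sum_congr rfl fun q _ =>
      Finset.sum_congr rfl fun r _ => ?_
    rw [hR2 (b (Sum.inl p)) (b (Sum.inr ())) (b (Sum.inl r)) (b (Sum.inl q)), hR1 (b (Sum.inl p)) (b (Sum.inr ())) (b (Sum.inl q)) (b (Sum.inl r))]
    ring
  have cLE2 : (∑ l, ∑ p, n l * (n p * R (b (Sum.inl p)) (b (Sum.inr ())) (b (Sum.inr ())) (b (Sum.inl l)))) = -(∑ p, ∑ q, (n p * n q) * R (b (Sum.inr ())) (b (Sum.inl p)) (b (Sum.inr ())) (b (Sum.inl q))) := by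
    calc (∑ l, ∑ p, n l * (n p * R (b (Sum.inl p)) (b (Sum.inr ())) (b (Sum.inr ())) (b (Sum.inl l))))
        = ∑ p, ∑ l, n l * (n p * R (b (Sum.inl p)) (b (Sum.inr ())) (b (Sum.inr ())) (b (Sum.inl l))) := Finset.sum_comm
      _ = ∑ p, ∑ q, -((n p * n q) * R (b (Sum.inr ())) (b (Sum.inl p)) (b (Sum.inr ())) (b (Sum.inl q))) :=
        Finset.sum_congr rfl fun p _ => Finset.sum_congr rfl fun q _ => by
          rw [hR1 (b (Sum.inl p)) (b (Sum.inr ())) (b (Sum.inr ())) (b (Sum.inl q))]; ring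
      _ = -(∑ p, ∑ q, (n p * n q) * R (b (Sum.inr ())) (b (Sum.inl p)) (b (Sum.inr ())) (b (Sum.inl q))) := neg2 _
  have bLE : (∑ l, n l * Ric b R P n n2 (b (Sum.inr ())) (b (Sum.inl l))) = (∑ p, ∑ q, ∑ r, R (b (Sum.inr ())) (b (Sum.inl p)) (b (Sum.inl q)) (b (Sum.inl r)) * n q * P p r) - (∑ p, ∑ q, (n p * n q) * R (b (Sum.inr ())) (b (Sum.inl p)) (b (Sum.inr ())) (b (Sum.inl q))) := by
    calc (∑ l, n l * Ric b R P n n2 (b (Sum.inr ())) (b (Sum.inl l)))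
        = ∑ l, ((∑ p, ∑ r, n l * (P p r * R (b (Sum.inl p)) (b (Sum.inr ())) (b (Sum.inl r)) (b (Sum.inl l))))
          + (∑ p, n l * (n p * R (b (Sum.inl p)) (b (Sum.inr ())) (b (Sum.inr ())) (b (Sum.inl l))))
          + (∑ r, n l * (n r * R (b (Sum.inr ())) (b (Sum.inr ())) (b (Sum.inl r)) (b (Sum.inl l))))
          + n l * (n2 * R (b (Sum.inr ())) (b (Sum.inr ())) (b (Sum.inr ())) (b (Sum.inl l)))) :=
        Finset.sum_congr rfl fun l _ => by rw [ricE]; simp only [mul_add, Finset.mul_sum]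
      _ = (∑ l, ∑ p, ∑ r, n l * (P p r * R (b (Sum.inl p)) (b (Sum.inr ())) (b (Sum.inl r)) (b (Sum.inl l))))
          + (∑ l, ∑ p, n l * (n p * R (b (Sum.inl p)) (b (Sum.inr ())) (b (Sum.inr ())) (b (Sum.inl l))))
          + (∑ l, ∑ r, n l * (n r * R (b (Sum.inr ())) (b (Sum.inr ())) (b (Sum.inl r)) (b (Sum.inl l))))
          + (∑ l, n l * (n2 * R (b (Sum.inr ())) (b (Sum.inr ())) (b (Sum.inr ())) (b (Sum.inl l)))) := by
        simp only [Finset.sum_add_distrib]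
      _ = (∑ p, ∑ q, ∑ r, R (b (Sum.inr ())) (b (Sum.inl p)) (b (Sum.inl q)) (b (Sum.inl r)) * n q * P p r) - (∑ p, ∑ q, (n p * n q) * R (b (Sum.inr ())) (b (Sum.inl p)) (b (Sum.inr ())) (b (Sum.inl q))) := by
        rw [cLE1, cLE2]
        simp only [hz0, mul_zero, Finset.sum_const_zero, add_zero]
        ring
  have bLL : Ric b R P n n2 (b (Sum.inr ())) (b (Sum.inr ())) = (∑ p, ∑ q, P p q * R (b (Sum.inr ())) (b (Sum.inl p)) (b (Sum.inr ())) (b (Sum.inl q))) := by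
    rw [ricE]
    simp only [hz0, hz1, mul_zero, zero_mul, Finset.sum_const_zero, add_zero, zero_add]
    exact Finset.sum_congr rfl fun p _ => Finset.sum_congr rfl fun q _ => by
      rw [hR1 (b (Sum.inl p)) (b (Sum.inr ())) (b (Sum.inl q)) (b (Sum.inr ())), hR2 (b (Sum.inr ())) (b (Sum.inl p)) (b (Sum.inl q)) (b (Sum.inr ()))]; ring
  have scalE : Scal b R P n n2
      = (∑ k, ∑ l, P k l * Ric b R P n n2 (b (Sum.inl k)) (b (Sum.inl l)))
      + (∑ k, n k * Ric b R P n n2 (b (Sum.inl k)) (b (Sum.inr ())))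
      + (∑ l, n l * Ric b R P n n2 (b (Sum.inr ())) (b (Sum.inl l)))
      + n2 * Ric b R P n n2 (b (Sum.inr ())) (b (Sum.inr ())) := by
    rw [Scal, Fintype.sum_sum_type]
    simp only [Fintype.sum_sum_type, Ginv, Finset.univ_unique, Finset.sum_singleton,
      Finset.sum_add_distrib]
    ring
  have s1 : Scal b R P n n2 = (∑ p, ∑ q, ∑ r, ∑ s, R (b (Sum.inl p)) (b (Sum.inl q)) (b (Sum.inl r)) (b (Sum.inl s)) * P p r * P q s) + 4 * (∑ p, ∑ q, ∑ r, R (b (Sum.inr ())) (b (Sum.inl p)) (b (Sum.inl q)) (b (Sum.inl r)) * n q * P p r) + 2 * (n2 * (∑ p, ∑ q, P p q * R (b (Sum.inr ())) (b (Sum.inl p)) (b (Sum.inr ())) (b (Sum.inl q)))) - 2 * (∑ p, ∑ q, (n p * n q) * R (b (Sum.inr ())) (b (Sum.inl p)) (b (Sum.inr ())) (b (Sum.inl q))) := by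
    rw [scalE, bEE, bEL, bLE, bLL]
    ring
  -- ===== part 2 conversions =====
  have cB1 : ∀ c, (∑ k, ∑ l, ∑ j, P k l * (n j * R (b (Sum.inl k)) (b (Sum.inl j)) (b (Sum.inl l)) (b (Sum.inl c))))
      = ∑ a, ∑ b', ∑ d, R (b (Sum.inl a)) (b (Sum.inl b')) (b (Sum.inl c)) (b (Sum.inl d)) * n a * P b' d := by
    intro c
    refine ((Finset.sum_congr rfl fun k _ => Finset.sum_comm).trans ?_)
    rw [Finset.sum_comm]
    refine Finset.sum_congr rfl fun p _ => Finset.sum_congr rfl fun q _ =>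
      Finset.sum_congr rfl fun r _ => ?_
    rw [hR2 (b (Sum.inl q)) (b (Sum.inl p)) (b (Sum.inl r)) (b (Sum.inl c)), hR1 (b (Sum.inl q)) (b (Sum.inl p)) (b (Sum.inl c)) (b (Sum.inl r))]
    ring
  have cB2 : ∀ c, (∑ k, ∑ l, P k l * (n2 * R (b (Sum.inl k)) (b (Sum.inr ())) (b (Sum.inl l)) (b (Sum.inl c))))
      = n2 * ∑ b', ∑ d, R (b (Sum.inr ())) (b (Sum.inl b')) (b (Sum.inl c)) (b (Sum.inl d)) * P b' d := by
    intro c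
    calc (∑ k, ∑ l, P k l * (n2 * R (b (Sum.inl k)) (b (Sum.inr ())) (b (Sum.inl l)) (b (Sum.inl c))))
        = ∑ p, ∑ q, n2 * (R (b (Sum.inr ())) (b (Sum.inl p)) (b (Sum.inl c)) (b (Sum.inl q)) * P p q) :=
        Finset.sum_congr rfl fun p _ => Finset.sum_congr rfl fun q _ => by
          rw [hR1 (b (Sum.inl p)) (b (Sum.inr ())) (b (Sum.inl q)) (b (Sum.inl c)), hR2 (b (Sum.inr ())) (b (Sum.inl p)) (b (Sum.inl q)) (b (Sum.inl c))]; ring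
      _ = _ := by simp only [Finset.mul_sum]
  have cB4 : ∀ c, (∑ k, n k * (n2 * R (b (Sum.inl k)) (b (Sum.inr ())) (b (Sum.inr ())) (b (Sum.inl c))))
      = -(n2 * ∑ j, n j * R (b (Sum.inr ())) (b (Sum.inl j)) (b (Sum.inr ())) (b (Sum.inl c))) := by
    intro c
    calc (∑ k, n k * (n2 * R (b (Sum.inl k)) (b (Sum.inr ())) (b (Sum.inr ())) (b (Sum.inl c))))
        = ∑ p, -(n2 * (n p * R (b (Sum.inr ())) (b (Sum.inl p)) (b (Sum.inr ())) (b (Sum.inl c)))) :=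
        Finset.sum_congr rfl fun p _ => by rw [hR1 (b (Sum.inl p)) (b (Sum.inr ())) (b (Sum.inr ())) (b (Sum.inl c))]; ring
      _ = _ := by simp only [Finset.sum_neg_distrib, Finset.mul_sum]
  have cB5 : ∀ c, (∑ l, ∑ j, n l * (n j * R (b (Sum.inr ())) (b (Sum.inl j)) (b (Sum.inl l)) (b (Sum.inl c))))
      = -∑ b', ∑ d, R (b (Sum.inr ())) (b (Sum.inl b')) (b (Sum.inl c)) (b (Sum.inl d)) * (n b' * n d) := by
    intro c
    calc (∑ l, ∑ j, n l * (n j * R (b (Sum.inr ())) (b (Sum.inl j)) (b (Sum.inl l)) (b (Sum.inl c))))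
        = ∑ j, ∑ l, n l * (n j * R (b (Sum.inr ())) (b (Sum.inl j)) (b (Sum.inl l)) (b (Sum.inl c))) := Finset.sum_comm
      _ = ∑ p, ∑ q, -(R (b (Sum.inr ())) (b (Sum.inl p)) (b (Sum.inl c)) (b (Sum.inl q)) * (n p * n q)) :=
        Finset.sum_congr rfl fun p _ => Finset.sum_congr rfl fun q _ => by
          rw [hR2 (b (Sum.inr ())) (b (Sum.inl p)) (b (Sum.inl q)) (b (Sum.inl c))]; ring
      _ = _ := neg2 _
  have cB7 : ∀ c, (∑ j, n2 * (n j * R (b (Sum.inr ())) (b (Sum.inl j)) (b (Sum.inr ())) (b (Sum.inl c))))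
      = n2 * ∑ j, n j * R (b (Sum.inr ())) (b (Sum.inl j)) (b (Sum.inr ())) (b (Sum.inl c)) := by
    intro c
    simp only [Finset.mul_sum]
  have split : ∀ c, (∑ b', ∑ d, R (b (Sum.inr ())) (b (Sum.inl b')) (b (Sum.inl c)) (b (Sum.inl d)) * (n2 * P b' d - n b' * n d))
      = n2 * (∑ b', ∑ d, R (b (Sum.inr ())) (b (Sum.inl b')) (b (Sum.inl c)) (b (Sum.inl d)) * P b' d)
        - ∑ b', ∑ d, R (b (Sum.inr ())) (b (Sum.inl b')) (b (Sum.inl c)) (b (Sum.inl d)) * (n b' * n d) := by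
    intro c
    calc (∑ b', ∑ d, R (b (Sum.inr ())) (b (Sum.inl b')) (b (Sum.inl c)) (b (Sum.inl d)) * (n2 * P b' d - n b' * n d))
        = ∑ p, ∑ q, (n2 * (R (b (Sum.inr ())) (b (Sum.inl p)) (b (Sum.inl c)) (b (Sum.inl q)) * P p q)
            - R (b (Sum.inr ())) (b (Sum.inl p)) (b (Sum.inl c)) (b (Sum.inl q)) * (n p * n q)) :=
        Finset.sum_congr rfl fun p _ => Finset.sum_congr rfl fun q _ => by ring
      _ = (∑ p, ∑ q, n2 * (R (b (Sum.inr ())) (b (Sum.inl p)) (b (Sum.inl c)) (b (Sum.inl q)) * P p q))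
          - ∑ p, ∑ q, R (b (Sum.inr ())) (b (Sum.inl p)) (b (Sum.inl c)) (b (Sum.inl q)) * (n p * n q) := by
        simp only [Finset.sum_sub_distrib]
      _ = _ := by simp only [Finset.mul_sum]
  -- ===== assembly =====
  constructor
  · simp only [Ein]
    rw [hν1, r1, s1]
    ring
  · intro c
    simp only [Ein]
    rw [hν0 c, mul_zero, sub_zero, ricNu, cB1 c, cB2 c, cA3 (b (Sum.inl c)), cB4 c, cB5 c, cB7 c,
      split c]
    simp only [hz0, mul_zero, zero_mul, Finset.sum_const_zero, add_zero, zero_add]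
    ring

end Statement10
end
end
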